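/- arXiv:1309.6173 — 7 statements merged into one kernel-verified Lean document; each statement's English description precedes it below -/
import Mathlib

section
/- Let γ > 0 and define Φ̂(z) := (1 + z²/4)^(−γ/2) for z ≥ 0. Then for all z > 0, Φ̂''(z) + (z/2)·Φ̂'(z) + (γ/2)·Φ̂(z) ≥ (γ/4)·(1 + z²/4)^(−γ/2−1). -/
/-- For `γ > 0` and `Φ̂ z = (1 + z²/4)^(−γ/2)`, for all `z > 0`,
`Φ̂''(z) + (z/2)Φ̂'(z) + (γ/2)Φ̂(z) ≥ (γ/4)(1 + z²/4)^(−γ/2−1)`. -/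
theorem stmt0 (γ : ℝ) (hγ : 0 < γ) (Φ : ℝ → ℝ)
    (hΦ : ∀ z : ℝ, Φ z = (1 + z ^ 2 / 4) ^ (-(γ / 2))) :
    ∀ z > (0 : ℝ),
      deriv (deriv Φ) z + z / 2 * deriv Φ z + γ / 2 * Φ z ≥
        γ / 4 * (1 + z ^ 2 / 4) ^ (-(γ / 2) - 1) := by
  intro z hz
  set p : ℝ := -(γ / 2) with hp
  have hΦe : Φ = fun x : ℝ => (1 + x ^ 2 / 4) ^ p := funext hΦ
  have hg : ∀ x : ℝ, (0 : ℝ) < 1 + x ^ 2 / 4 := by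
    intro x; positivity
  have hgd : ∀ x : ℝ, HasDerivAt (fun y : ℝ => 1 + y ^ 2 / 4) (x / 2) x := by
    intro x
    have h1 : HasDerivAt (fun y : ℝ => y ^ 2) (2 * x) x := by
      simpa using hasDerivAt_pow 2 x
    have h2 := (h1.div_const 4).const_add 1
    exact h2.congr_deriv (by ring)
  have hΦ' : ∀ x : ℝ, HasDerivAt Φ (x / 2 * p * (1 + x ^ 2 / 4) ^ (p - 1)) x := by
    intro x
    rw [hΦe]
    exact (hgd x).rpow_const (Or.inl (hg x).ne')
  have hderivΦ : deriv Φ = fun x : ℝ => x / 2 * p * (1 + x ^ 2 / 4) ^ (p - 1) :=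
    funext fun x => (hΦ' x).deriv
  -- second derivative
  have hΦ'' : HasDerivAt (deriv Φ)
      (p / 2 * (1 + z ^ 2 / 4) ^ (p - 1)
        + z / 2 * p * (z / 2 * (p - 1) * (1 + z ^ 2 / 4) ^ (p - 2))) z := by
    rw [hderivΦ]
    have h1 : HasDerivAt (fun x : ℝ => x / 2 * p) (p / 2) z := by
      have := ((hasDerivAt_id z).div_const 2).mul_const p
      exact this.congr_deriv (by ring)
    have h2 : HasDerivAt (fun x : ℝ => (1 + x ^ 2 / 4) ^ (p - 1))
        (z / 2 * (p - 1) * (1 + z ^ 2 / 4) ^ (p - 1 - 1)) z :=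
      (hgd z).rpow_const (Or.inl (hg z).ne')
    have := h1.mul h2
    exact this.congr_deriv (by ring_nf)
  have hd2 : deriv (deriv Φ) z
      = p / 2 * (1 + z ^ 2 / 4) ^ (p - 1)
        + z / 2 * p * (z / 2 * (p - 1) * (1 + z ^ 2 / 4) ^ (p - 2)) := hΦ''.deriv
  set u : ℝ := 1 + z ^ 2 / 4 with hu
  have hu1 : (1 : ℝ) ≤ u := by
    rw [hu]; nlinarith [sq_nonneg z]
  have hupos : (0 : ℝ) < u := hg z
  set B : ℝ := u ^ (p - 2) with hB
  have hBpos : (0 : ℝ) < B := Real.rpow_pos_of_pos hupos _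
  have hA : u ^ (p - 1) = u * B := by
    have h := Real.rpow_add hupos (p - 2) 1
    rw [Real.rpow_one] at h
    have e : p - 2 + 1 = p - 1 := by ring
    rw [e] at h
    rw [hB, h]; ring
  have hP : u ^ p = u * (u * B) := by
    have h := Real.rpow_add hupos (p - 1) 1
    rw [Real.rpow_one] at h
    have e : p - 1 + 1 = p := by ring
    rw [e] at h
    rw [h, hA]; ring
  rw [hd2, hderivΦ, hΦ z]
  show p / 2 * u ^ (p - 1) + z / 2 * p * (z / 2 * (p - 1) * u ^ (p - 2))
      + z / 2 * (z / 2 * p * u ^ (p - 1)) + γ / 2 * u ^ p ≥ γ / 4 * u ^ (p - 1)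
  rw [hA, hP, ← hB]
  have h4 : z ^ 2 = 4 * (u - 1) := by rw [hu]; ring
  have key : γ * (γ + 2) / 4 * ((u - 1) * B) ≥ 0 := by
    have h1 : (0 : ℝ) ≤ u - 1 := by linarith
    positivity
  have heq : p / 2 * (u * B) + z / 2 * p * (z / 2 * (p - 1) * B)
      + z / 2 * (z / 2 * p * (u * B)) + γ / 2 * (u * (u * B)) - γ / 4 * (u * B)
      = γ * (γ + 2) / 4 * ((u - 1) * B) := by
    rw [hp]
    linear_combination (γ / 2 * (γ / 2 + 1) * B / 4 - γ / 2 * u * B / 4) * h4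
  linarith [key, heq]
end

section
/- Let γ ∈ (0,1) and let Φ be the solution of the initial value problem Φ''(z) + (z/2)Φ'(z) + (γ/2)Φ(z) = 0 on [0,∞) with Φ(0) = 1 and Φ'(0) = 0. Then Φ is positive and strictly decreasing on [0,∞). -/
/-- Let `γ ∈ (0,1)` and `Φ` solve `Φ'' + (z/2)Φ' + (γ/2)Φ = 0` on `[0,∞)`
with `Φ(0)=1`, `Φ'(0)=0`. Then `Φ` is positive and strictly decreasing on `[0,∞)`. -/
theorem stmt6 (γ : ℝ) (hγ : γ ∈ Set.Ioo (0 : ℝ) 1) (Φ : ℝ → ℝ)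
    (hsmooth : ContDiff ℝ 2 Φ)
    (hode : ∀ z ≥ (0 : ℝ), deriv (deriv Φ) z + z / 2 * deriv Φ z + γ / 2 * Φ z = 0)
    (h0 : Φ 0 = 1) (h0' : deriv Φ 0 = 0) :
    (∀ z ≥ (0 : ℝ), 0 < Φ z) ∧ StrictAntiOn Φ (Set.Ici (0 : ℝ)) := by
  obtain ⟨hγ0, hγ1⟩ := hγ
  have hΦd : Differentiable ℝ Φ := hsmooth.differentiable two_ne_zero
  have hΦ'c1 : ContDiff ℝ 1 (deriv Φ) := by
    have := (contDiff_succ_iff_deriv.mp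
      (show ContDiff ℝ ((1:ℕ)+1) Φ from by exact_mod_cast hsmooth)).2.2
    exact_mod_cast this
  have hΦ'd : Differentiable ℝ (deriv Φ) := hΦ'c1.differentiable one_ne_zero
  -- the exponential weight
  set E : ℝ → ℝ := fun z => Real.exp (z ^ 2 / 4) with hE_def
  have hE : ∀ z : ℝ, HasDerivAt E (z / 2 * E z) z := by
    intro z
    have h : HasDerivAt (fun z : ℝ => z ^ 2 / 4) (z / 2) z := by
      have := (hasDerivAt_pow 2 z).div_const 4
      exact this.congr_deriv (by ring)
    simpa [hE_def, mul_comm] using h.exp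
  have hEpos : ∀ z : ℝ, 0 < E z := fun z => Real.exp_pos _
  -- the auxiliary function s = Φ' + (z/2) Φ
  set s : ℝ → ℝ := fun z => deriv Φ z + z / 2 * Φ z with hs_def
  have hs : ∀ z : ℝ, HasDerivAt s
      (deriv (deriv Φ) z + (1 / 2 * Φ z + z / 2 * deriv Φ z)) z := by
    intro z
    exact ((hΦ'd z).hasDerivAt).add
      ((((hasDerivAt_id z).div_const 2).mul (hΦd z).hasDerivAt))
  have hs_cont : Continuous s :=
    (hΦ'c1.continuous).add ((continuous_id.div_const 2).mul hΦd.continuous)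
  have hs0 : s 0 = 0 := by simp [hs_def, h0']
  -- r = Φ * E with derivative s * E
  set r : ℝ → ℝ := fun z => Φ z * E z with hr_def
  have hr : ∀ z : ℝ, HasDerivAt r (s z * E z) z := by
    intro z
    have := ((hΦd z).hasDerivAt).mul (hE z)
    exact this.congr_deriv (by simp [hs_def]; ring)
  have hr0 : r 0 = 1 := by simp [hr_def, hE_def, h0]
  -- Positivity
  have key : ∀ z ≥ (0:ℝ), 0 < Φ z := by
    by_contra hcon
    push_neg at hcon
    obtain ⟨z₁, hz₁, hΦz₁⟩ := hcon
    set S : Set ℝ := {z | 0 ≤ z ∧ Φ z ≤ 0} with hS_def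
    have hS_ne : S.Nonempty := ⟨z₁, hz₁, hΦz₁⟩
    have hS_bdd : BddBelow S := ⟨0, fun z hz => hz.1⟩
    have hS_closed : IsClosed S :=
      (isClosed_le continuous_const continuous_id).inter
        (isClosed_le hΦd.continuous continuous_const)
    set a : ℝ := sInf S with ha_def
    have haS : a ∈ S := hS_closed.csInf_mem hS_ne hS_bdd
    have ha0 : 0 ≤ a := haS.1
    have hpos_lt : ∀ z, 0 ≤ z → z < a → 0 < Φ z := by
      intro z hz hlt
      by_contra hle
      push_neg at hle
      exact absurd (csInf_le hS_bdd ⟨hz, hle⟩) (not_le.mpr hlt)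
    have ha_pos : 0 < a := by
      rcases ha0.lt_or_eq with h | h
      · exact h
      · exfalso; have := haS.2; rw [← h, h0] at this; linarith
    -- Φ ≥ 0 on [0, a]
    have hnonneg : ∀ z ∈ Set.Icc (0:ℝ) a, 0 ≤ Φ z := by
      have h1 : Set.Ico (0:ℝ) a ⊆ {z | 0 ≤ Φ z} :=
        fun z hz => (hpos_lt z hz.1 hz.2).le
      have h2 : closure (Set.Ico (0:ℝ) a) ⊆ {z | 0 ≤ Φ z} := by
        rw [← (isClosed_le continuous_const hΦd.continuous).closure_eq]
        exact closure_mono h1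
      rw [closure_Ico ha_pos.ne] at h2
      exact fun z hz => h2 hz
    -- s is monotone on [0,a]
    have hs_mono : MonotoneOn s (Set.Icc 0 a) := by
      apply monotoneOn_of_deriv_nonneg (convex_Icc 0 a) hs_cont.continuousOn
        (fun z hz => ((hs z).differentiableAt).differentiableWithinAt)
      intro z hz
      rw [interior_Icc] at hz
      rw [(hs z).deriv]
      have hodez := hode z hz.1.le
      have hΦz : 0 ≤ Φ z := hnonneg z ⟨hz.1.le, hz.2.le⟩
      nlinarith
    have hs_nonneg : ∀ z ∈ Set.Icc (0:ℝ) a, 0 ≤ s z := by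
      intro z hz
      have := hs_mono (Set.left_mem_Icc.mpr ha0) hz hz.1
      rw [hs0] at this; exact this
    -- r is monotone on [0,a]
    have hr_mono : MonotoneOn r (Set.Icc 0 a) := by
      apply monotoneOn_of_deriv_nonneg (convex_Icc 0 a)
        (fun z hz => ((hr z).differentiableAt).continuousAt.continuousWithinAt)
        (fun z hz => ((hr z).differentiableAt).differentiableWithinAt)
      intro z hz
      rw [interior_Icc] at hz
      rw [(hr z).deriv]
      exact mul_nonneg (hs_nonneg z ⟨hz.1.le, hz.2.le⟩) (hEpos z).le
    have h1ra : 1 ≤ r a := by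
      have := hr_mono (Set.left_mem_Icc.mpr ha0) (Set.right_mem_Icc.mpr ha0) ha0
      rw [hr0] at this; exact this
    have hra' : 1 ≤ Φ a * E a := h1ra
    nlinarith [mul_nonneg (neg_nonneg.mpr haS.2) (hEpos a).le]
  -- u = Φ' * E is strictly decreasing on [0, ∞)
  set u : ℝ → ℝ := fun z => deriv Φ z * E z with hu_def
  have hu : ∀ z : ℝ, HasDerivAt u
      ((deriv (deriv Φ) z + z / 2 * deriv Φ z) * E z) z := by
    intro z
    have := ((hΦ'd z).hasDerivAt).mul (hE z)
    exact this.congr_deriv (by ring)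
  have hu_anti : StrictAntiOn u (Set.Ici 0) := by
    apply strictAntiOn_of_deriv_neg (convex_Ici 0)
      (fun z hz => ((hu z).differentiableAt).continuousAt.continuousWithinAt)
    intro z hz
    rw [interior_Ici] at hz
    rw [(hu z).deriv]
    have hodez := hode z hz.le
    have hΦz := key z hz.le
    have hEz := hEpos z
    have heq : deriv (deriv Φ) z + z / 2 * deriv Φ z = -(γ / 2 * Φ z) := by linarith
    rw [heq]
    apply mul_neg_of_neg_of_pos _ hEz
    nlinarith
  have hderiv_neg : ∀ z ∈ Set.Ioi (0:ℝ), deriv Φ z < 0 := by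
    intro z hz
    have := hu_anti (Set.self_mem_Ici) (Set.mem_Ici.mpr hz.le) hz
    have hu0 : u 0 = 0 := by simp [hu_def, h0']
    rw [hu0] at this
    have h1 : deriv Φ z * E z < 0 := this
    have hEz := hEpos z
    by_contra h
    push_neg at h
    nlinarith [mul_nonneg h hEz.le]
  refine ⟨key, strictAntiOn_of_deriv_neg (convex_Ici 0) hΦd.continuous.continuousOn ?_⟩
  rw [interior_Ici]
  exact hderiv_neg
end

section
/- Let γ ∈ (0,1) and let Φ solve Φ''(z) + (z/2)Φ'(z) + (γ/2)Φ(z) = 0 with Φ(0)=1, Φ'(0)=0. Then there exist constants c > 0 and C > 0 such that c·z^(−γ) ≤ Φ(z) ≤ C·z^(−γ) for all z ≥ 1. -/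
open Filter Set Topology

lemma slope_left {f : ℝ → ℝ} {d x : ℝ} (hf : HasDerivAt f d x) (hd : 0 < d) :
    ∀ᶠ y in 𝓝[<] x, f y < f x := by
  have h := hasDerivAt_iff_tendsto_slope.mp hf
  have h2 : ∀ᶠ y in 𝓝[≠] x, 0 < slope f x y :=
    h.eventually (eventually_gt_nhds hd)
  have h3 : ∀ᶠ y in 𝓝[<] x, 0 < slope f x y :=
    h2.filter_mono (nhdsWithin_mono x (fun y (hy : y ∈ Iio x) => (ne_of_lt hy : y ≠ x)))
  filter_upwards [h3, self_mem_nhdsWithin] with y hy hyx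
  rw [slope_def_field] at hy
  rcases div_pos_iff.mp hy with ⟨h1, h2⟩ | ⟨h1, h2⟩
  · have : y - x < 0 := sub_neg.mpr hyx
    linarith
  · linarith

lemma slope_right {f : ℝ → ℝ} {d x : ℝ} (hf : HasDerivAt f d x) (hd : 0 < d) :
    ∀ᶠ y in 𝓝[>] x, f x < f y := by
  have h := hasDerivAt_iff_tendsto_slope.mp hf
  have h2 : ∀ᶠ y in 𝓝[≠] x, 0 < slope f x y :=
    h.eventually (eventually_gt_nhds hd)
  have h3 : ∀ᶠ y in 𝓝[>] x, 0 < slope f x y :=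
    h2.filter_mono (nhdsWithin_mono x (fun y (hy : y ∈ Ioi x) => (ne_of_gt hy : y ≠ x)))
  filter_upwards [h3, self_mem_nhdsWithin] with y hy hyx
  rw [slope_def_field] at hy
  rcases div_pos_iff.mp hy with ⟨h1, h2⟩ | ⟨h1, h2⟩
  · linarith
  · have : 0 < y - x := sub_pos.mpr hyx
    linarith

lemma stay_nonneg {f : ℝ → ℝ} (hf : Differentiable ℝ f) {a : ℝ}
    (hzero : ∀ t, a ≤ t → f t = 0 → 0 < deriv f t) (ha : 0 ≤ f a) :
    ∀ z, a ≤ z → 0 ≤ f z := by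
  intro z haz
  by_contra hneg
  push_neg at hneg
  have hcont : Continuous f := hf.continuous
  have haz' : a < z := by
    rcases eq_or_lt_of_le haz with rfl | h
    · linarith
    · exact h
  set S : Set ℝ := {t | t ∈ Icc a z ∧ 0 ≤ f t} with hS
  have hSclosed : IsClosed S := (isClosed_Icc.inter (isClosed_le continuous_const hcont))
  have hSne : S.Nonempty := ⟨a, ⟨le_refl a, le_of_lt haz'⟩, ha⟩
  have hSbdd : BddAbove S := ⟨z, fun t ht => ht.1.2⟩
  set s := sSup S with hs
  have hsmem : s ∈ S := hSclosed.csSup_mem hSne hSbdd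
  have hsz : s < z := lt_of_le_of_ne hsmem.1.2 (fun h => by rw [h] at hsmem; linarith [hsmem.2])
  have hlt : ∀ t, t ∈ Ioc s z → f t < 0 := by
    intro t ht
    by_contra hge
    push_neg at hge
    have : t ∈ S := ⟨⟨le_trans hsmem.1.1 (le_of_lt ht.1), ht.2⟩, hge⟩
    exact absurd (le_csSup hSbdd this) (not_le.mpr ht.1)
  -- f s ≤ 0 by right continuity
  have hfs0 : f s = 0 := by
    have htend : Filter.Tendsto f (𝓝[>] s) (𝓝 (f s)) :=
      (hcont.tendsto s).mono_left nhdsWithin_le_nhds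
    have hev : ∀ᶠ t in 𝓝[>] s, f t ≤ 0 := by
      have hmem : Ioc s z ∈ 𝓝[>] s := Ioc_mem_nhdsGT_of_mem ⟨le_refl s, hsz⟩
      filter_upwards [hmem] with t ht using le_of_lt (hlt t ht)
    have : f s ≤ 0 := le_of_tendsto htend hev
    exact le_antisymm this hsmem.2
  have hd := hzero s hsmem.1.1 hfs0
  have := slope_right (hf s).hasDerivAt hd
  rw [hfs0] at this
  have hmem : Ioc s z ∈ 𝓝[>] s := Ioc_mem_nhdsGT_of_mem ⟨le_refl s, hsz⟩
  have : ∀ᶠ t in 𝓝[>] s, False := by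
    filter_upwards [this, hmem] with t h1 h2
    exact absurd (hlt t h2) (not_lt.mpr (le_of_lt h1))
  exact this.exists.elim (fun t ht => ht)

set_option maxHeartbeats 1000000 in
/-- Let `γ ∈ (0,1)` and `Φ` solve `Φ'' + (z/2)Φ' + (γ/2)Φ = 0` with
`Φ(0)=1`, `Φ'(0)=0`. Then there are `c, C > 0` with `c z^(−γ) ≤ Φ(z) ≤ C z^(−γ)`
for all `z ≥ 1`. -/
theorem stmt7 (γ : ℝ) (hγ : γ ∈ Set.Ioo (0 : ℝ) 1) (Φ : ℝ → ℝ)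
    (hsmooth : ContDiff ℝ 2 Φ)
    (hode : ∀ z ≥ (0 : ℝ), deriv (deriv Φ) z + z / 2 * deriv Φ z + γ / 2 * Φ z = 0)
    (h0 : Φ 0 = 1) (h0' : deriv Φ 0 = 0) :
    ∃ c > (0 : ℝ), ∃ C > (0 : ℝ), ∀ z ≥ (1 : ℝ),
      c * z ^ (-γ) ≤ Φ z ∧ Φ z ≤ C * z ^ (-γ) := by
  obtain ⟨hγ0, hγ1⟩ := hγ
  have hΦdiff : Differentiable ℝ Φ := hsmooth.differentiable (by norm_num)
  have h21 : ContDiff ℝ ((1:ℕ) + 1) Φ := by exact_mod_cast hsmooth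
  have hΦ'cd : ContDiff ℝ 1 (deriv Φ) := (contDiff_succ_iff_deriv.mp h21).2.2
  have hΦ'diff : Differentiable ℝ (deriv Φ) := hΦ'cd.differentiable (by norm_num)
  have hΦcont : Continuous Φ := hΦdiff.continuous
  have hΦ'cont : Continuous (deriv Φ) := hΦ'diff.continuous
  set h : ℝ → ℝ := fun z => deriv Φ z + z / 2 * Φ z with hhdef
  have hhD : ∀ z : ℝ, HasDerivAt h
      (deriv (deriv Φ) z + ((1:ℝ)/2 * Φ z + z/2 * deriv Φ z)) z := by
    intro z
    exact ((hΦ'diff z).hasDerivAt).add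
      ((((hasDerivAt_id z).div_const 2).mul (hΦdiff z).hasDerivAt).congr_deriv
        (by simp only [id_eq]; try ring))
  have hhderiv : ∀ z, 0 ≤ z → deriv h z = (1 - γ)/2 * Φ z := by
    intro z hz
    rw [(hhD z).deriv]
    have := hode z hz
    linarith
  have hhdiff : Differentiable ℝ h := fun z => ((hhD z)).differentiableAt
  have hh0 : h 0 = 0 := by simp [hhdef, h0']
  -- positivity of Φ
  have hpos : ∀ z, 0 ≤ z → 0 < Φ z := by
    by_contra hc
    push_neg at hc
    obtain ⟨w, hw0, hwle⟩ := hc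
    set S : Set ℝ := {t | 0 ≤ t ∧ Φ t ≤ 0} with hSdef
    have hSclosed : IsClosed S := by
      have : S = {t | 0 ≤ t} ∩ {t | Φ t ≤ 0} := rfl
      rw [this]
      exact (isClosed_le continuous_const continuous_id).inter
        (isClosed_le hΦcont continuous_const)
    have hSne : S.Nonempty := ⟨w, hw0, hwle⟩
    have hSbdd : BddBelow S := ⟨0, fun t ht => ht.1⟩
    set z1 := sInf S with hz1def
    have hz1mem : z1 ∈ S := hSclosed.csInf_mem hSne hSbdd
    have hz1pos : 0 < z1 := by
      rcases eq_or_lt_of_le hz1mem.1 with heq | hlt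
      · exfalso
        rw [← heq] at hz1mem
        have := hz1mem.2
        rw [h0] at this
        linarith
      · exact hlt
    have hpre : ∀ t, 0 ≤ t → t < z1 → 0 < Φ t := by
      intro t ht htz
      by_contra hle
      push_neg at hle
      exact absurd (csInf_le hSbdd ⟨ht, hle⟩) (not_le.mpr htz)
    have hΦz1 : Φ z1 = 0 := by
      refine le_antisymm hz1mem.2 ?_
      have htend : Filter.Tendsto Φ (𝓝[<] z1) (𝓝 (Φ z1)) :=
        (hΦcont.tendsto z1).mono_left nhdsWithin_le_nhds
      refine ge_of_tendsto htend ?_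
      filter_upwards [Ico_mem_nhdsLT_of_mem (⟨hz1pos, le_refl z1⟩ : z1 ∈ Ioc 0 z1)]
        with t ht using le_of_lt (hpre t ht.1 ht.2)
    have hmono : StrictMonoOn h (Icc 0 z1) := by
      refine strictMonoOn_of_deriv_pos (convex_Icc _ _) hhdiff.continuous.continuousOn ?_
      intro t ht
      rw [interior_Icc] at ht
      rw [hhderiv t (le_of_lt ht.1)]
      have := hpre t (le_of_lt ht.1) ht.2
      nlinarith
    have hhz1 : 0 < h z1 := by
      have := hmono (left_mem_Icc.mpr (le_of_lt hz1pos))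
        (right_mem_Icc.mpr (le_of_lt hz1pos)) hz1pos
      rwa [hh0] at this
    have hΦ'z1 : 0 < deriv Φ z1 := by
      have : h z1 = deriv Φ z1 + z1/2 * Φ z1 := rfl
      rw [hΦz1] at this; rw [this] at hhz1; linarith
    have hev := slope_left (hΦdiff z1).hasDerivAt hΦ'z1
    rw [hΦz1] at hev
    have hmem' : Ico 0 z1 ∈ 𝓝[<] z1 :=
      Ico_mem_nhdsLT_of_mem (⟨hz1pos, le_refl z1⟩ : z1 ∈ Ioc 0 z1)
    obtain ⟨t, ht1, ht2⟩ := (hev.and (eventually_of_mem hmem' (fun t ht => ht))).exists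
    exact absurd ht1 (not_lt.mpr (le_of_lt (hpre t ht2.1 ht2.2)))
  -- derivative of Φ is negative for z > 0
  have hexpD : ∀ z : ℝ, HasDerivAt (fun z : ℝ => Real.exp (z^2/4)) (z/2 * Real.exp (z^2/4)) z := by
    intro z
    have h1 : HasDerivAt (fun z : ℝ => z^2/4) (z/2) z := by
      have := (hasDerivAt_pow 2 z).div_const 4
      refine this.congr_deriv ?_
      simp
      ring
    have := h1.exp
    convert this using 1
    ring
  have hpD : ∀ z : ℝ, HasDerivAt (fun z => Real.exp (z^2/4) * deriv Φ z)
      (z/2 * Real.exp (z^2/4) * deriv Φ z + Real.exp (z^2/4) * deriv (deriv Φ) z) z := by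
    intro z
    exact ((hexpD z).mul (hΦ'diff z).hasDerivAt).congr_deriv (by ring)
  have hΦ'neg : ∀ z, 0 < z → deriv Φ z < 0 := by
    intro z hz
    have hanti : StrictAntiOn (fun z => Real.exp (z^2/4) * deriv Φ z) (Ici 0) := by
      refine strictAntiOn_of_deriv_neg (convex_Ici _) ?_ ?_
      · exact fun t _ => ((hpD t).continuousAt).continuousWithinAt
      · intro t ht
        rw [interior_Ici] at ht
        rw [(hpD t).deriv]
        have hode' := hode t (le_of_lt ht)
        have hE : 0 < Real.exp (t^2/4) := Real.exp_pos _
        have hP := hpos t (le_of_lt ht)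
        have h2 : Real.exp (t ^ 2 / 4) * (deriv (deriv Φ) t + t / 2 * deriv Φ t + γ / 2 * Φ t) = 0 := by
          rw [hode']; ring
        nlinarith [mul_pos hE hP]
    have := hanti (self_mem_Ici) (mem_Ici.mpr (le_of_lt hz)) hz
    simp only [h0', mul_zero] at this
    have hE : 0 < Real.exp (z^2/4) := Real.exp_pos _
    nlinarith
  -- h positive for z > 0
  have hhpos : ∀ z, 0 < z → 0 < h z := by
    intro z hz
    have hmono : StrictMonoOn h (Ici 0) := by
      refine strictMonoOn_of_deriv_pos (convex_Ici _) hhdiff.continuous.continuousOn ?_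
      intro t ht
      rw [interior_Ici] at ht
      rw [hhderiv t (le_of_lt ht)]
      have := hpos t (le_of_lt ht)
      nlinarith
    have := hmono self_mem_Ici (mem_Ici.mpr (le_of_lt hz)) hz
    rwa [hh0] at this
  -- lower bound
  have hc1 : 0 < h 1 := hhpos 1 one_pos
  have hLD : ∀ z : ℝ, 0 < z → HasDerivAt (fun z => h z * z ^ (γ-1))
      (deriv h z * z ^ (γ-1) + h z * ((γ-1) * z ^ (γ-2))) z := by
    intro z hz
    have h1 := (hhdiff z).hasDerivAt.mul (Real.hasDerivAt_rpow_const (x := z) (p := γ-1) (Or.inl (ne_of_gt hz)))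
    have e : γ - 1 - 1 = γ - 2 := by ring
    rw [e] at h1
    exact h1
  have hLmono : MonotoneOn (fun z => h z * z ^ (γ-1)) (Ici 1) := by
    refine monotoneOn_of_deriv_nonneg (convex_Ici _) ?_ ?_ ?_
    · exact fun t ht => ((hLD t (lt_of_lt_of_le one_pos ht)).continuousAt).continuousWithinAt
    · intro t ht
      rw [interior_Ici] at ht
      exact ((hLD t (lt_trans one_pos ht)).differentiableAt).differentiableWithinAt
    · intro t ht
      rw [interior_Ici] at ht
      have ht0 : (0:ℝ) < t := lt_trans one_pos ht
      rw [(hLD t ht0).deriv, hhderiv t (le_of_lt ht0)]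
      have e1 : t ^ (γ-1) = t ^ (γ-2) * t := by
        rw [show γ-(1:ℝ) = γ-2+1 by ring, Real.rpow_add_one (ne_of_gt ht0)]
      rw [e1]
      have hrp : 0 < t ^ (γ-2) := Real.rpow_pos_of_pos ht0 _
      have hd' : deriv Φ t < 0 := hΦ'neg t ht0
      have hht : h t = deriv Φ t + t/2 * Φ t := rfl
      have hint : 0 ≤ t ^ (γ-2) * ((1-γ) * (-(deriv Φ t))) :=
        mul_nonneg hrp.le (mul_nonneg (by linarith) (by linarith))
      nlinarith [hint]
  have hlow : ∀ z, 1 ≤ z → 2 * h 1 * z ^ (-γ) ≤ Φ z := by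
    intro z hz
    have hz0 : (0:ℝ) < z := lt_of_lt_of_le one_pos hz
    have hL := hLmono (self_mem_Ici) (mem_Ici.mpr hz) hz
    simp only [Real.one_rpow, mul_one] at hL
    -- hL : h 1 ≤ h z * z^(γ-1)
    have hd' : deriv Φ z < 0 := hΦ'neg z hz0
    have hht : h z = deriv Φ z + z/2 * Φ z := rfl
    -- h z ≤ z/2 * Φ z
    have key1 : h z ≤ z/2 * Φ z := by linarith
    -- h 1 * z^(1-γ) ≤ h z
    have e2 : z ^ (γ-1) * z ^ (1-γ) = 1 := by
      rw [← Real.rpow_add hz0]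
      norm_num
    have hzp1 : 0 < z ^ (1-γ) := Real.rpow_pos_of_pos hz0 _
    have key2 : h 1 * z ^ (1-γ) ≤ h z := by
      calc h 1 * z ^ (1-γ) ≤ (h z * z ^ (γ-1)) * z ^ (1-γ) := by
            exact mul_le_mul_of_nonneg_right hL (le_of_lt hzp1)
        _ = h z := by rw [mul_assoc, e2, mul_one]
    have e3 : z ^ (1-γ) = z ^ (-γ) * z := by
      rw [show (1:ℝ)-γ = -γ+1 by ring, Real.rpow_add_one (ne_of_gt hz0)]
    rw [e3] at key2
    have t2 : 2 * h z ≤ z * Φ z := by rw [hht]; linarith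
    have t1 : 2 * (h 1 * (z ^ (-γ) * z)) ≤ 2 * h z := by linarith
    have hfin : z * (2 * h 1 * z ^ (-γ)) ≤ z * Φ z := by
      have e4 : z * (2 * h 1 * z ^ (-γ)) = 2 * (h 1 * (z ^ (-γ) * z)) := by ring
      linarith [e4.le, e4.ge]
    exact le_of_mul_le_mul_left hfin hz0
  -- upper bound machinery
  set β : ℝ := (1+γ)/2 with hβ
  have hβ1 : β < 1 := by rw [hβ]; linarith
  have hβγ : γ < β := by rw [hβ]; linarith
  have hβpos : 0 < β := by rw [hβ]; linarith
  set Z1 : ℝ := max 1 (Real.sqrt (8/(1-γ))) with hZ1def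
  have hZ1ge1 : (1:ℝ) ≤ Z1 := le_max_left _ _
  have hZ1pos : (0:ℝ) < Z1 := lt_of_lt_of_le one_pos hZ1ge1
  have hZ1sq : ∀ t, Z1 ≤ t → 8 ≤ (1-γ)*t^2 := by
    intro t ht
    have h1 : Real.sqrt (8/(1-γ)) ≤ t := le_trans (le_max_right _ _) ht
    have h2 : 8/(1-γ) ≤ t^2 := by
      have h3 : Real.sqrt (8/(1-γ))^2 ≤ t^2 :=
        pow_le_pow_left₀ (Real.sqrt_nonneg _) h1 2
      rwa [Real.sq_sqrt (by
        have h4 : (0:ℝ) < 1-γ := by linarith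
        positivity)] at h3
    have h4 : (0:ℝ) < 1-γ := by linarith
    have := (div_le_iff₀ h4).mp h2
    linarith
  set G : ℝ → ℝ := fun t => t * deriv Φ t + β * Φ t with hGdef
  have hGD : ∀ t : ℝ, HasDerivAt G
      (deriv Φ t + t * deriv (deriv Φ) t + β * deriv Φ t) t := by
    intro t
    exact (((hasDerivAt_id t).mul (hΦ'diff t).hasDerivAt).add
      ((hΦdiff t).hasDerivAt.const_mul β)).congr_deriv (by simp only [id_eq]; ring)
  have hGdiff : Differentiable ℝ G := fun t => (hGD t).differentiableAt
  have hGzero : ∀ t, Z1 ≤ t → G t = 0 → 0 < deriv G t := by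
    intro t ht hGt
    have ht0 : (0:ℝ) < t := lt_of_lt_of_le hZ1pos ht
    have hode' := hode t (le_of_lt ht0)
    have hΦpos := hpos t (le_of_lt ht0)
    have hGt' : t * deriv Φ t + β * Φ t = 0 := hGt
    have ht8 := hZ1sq t ht
    have e1 : t * deriv G t = ((β - γ)/2*t^2 - β*(1+β)) * Φ t := by
      rw [(hGD t).deriv]
      linear_combination ((1+β) - t^2/2) * hGt' + t^2 * hode'
    have e2 : 0 < t * deriv G t := by
      rw [e1]
      have hfac : 0 < (β - γ)/2*t^2 - β*(1+β) := by
        have hbg : β - γ = (1-γ)/2 := by rw [hβ]; ring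
        nlinarith [ht8]
      exact mul_pos hfac hΦpos
    by_contra hle
    push_neg at hle
    nlinarith [mul_nonpos_of_nonneg_of_nonpos ht0.le hle]
  -- entry point for G ≥ 0
  have hGentry : ∃ z0, Z1 ≤ z0 ∧ 0 ≤ G z0 := by
    by_contra hcon
    push_neg at hcon
    -- V = z^β * Φ z is antitone on [Z1, ∞)
    have hVD : ∀ z : ℝ, 0 < z → HasDerivAt (fun z => z ^ β * Φ z)
        (β * z^(β-1) * Φ z + z^β * deriv Φ z) z := by
      intro z hz
      exact ((Real.hasDerivAt_rpow_const (Or.inl (ne_of_gt hz))).mul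
        (hΦdiff z).hasDerivAt).congr_deriv (by ring)
    have hVanti : AntitoneOn (fun z => z ^ β * Φ z) (Ici Z1) := by
      refine antitoneOn_of_deriv_nonpos (convex_Ici _) ?_ ?_ ?_
      · exact fun t ht => ((hVD t (lt_of_lt_of_le hZ1pos ht)).continuousAt).continuousWithinAt
      · intro t ht
        rw [interior_Ici] at ht
        exact ((hVD t (lt_trans hZ1pos ht)).differentiableAt).differentiableWithinAt
      · intro t ht
        rw [interior_Ici] at ht
        have ht0 : (0:ℝ) < t := lt_trans hZ1pos ht
        rw [(hVD t ht0).deriv]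
        have hGt := hcon t (le_of_lt ht)
        have e1 : t ^ β = t ^ (β-1) * t := by
          rw [show β = β-1+1 by ring, Real.rpow_add_one (ne_of_gt ht0)]
          ring_nf
        rw [e1]
        have hrp : 0 < t ^ (β-1) := Real.rpow_pos_of_pos ht0 _
        have : β * t^(β-1) * Φ t + t^(β-1)*t * deriv Φ t = t^(β-1) * G t := by
          rw [hGdef]; ring
        rw [this]
        exact mul_nonpos_of_nonneg_of_nonpos hrp.le (le_of_lt hGt)
    set K : ℝ := Z1 ^ β * Φ Z1 with hKdef
    have hKpos : 0 < K :=
      mul_pos (Real.rpow_pos_of_pos hZ1pos _) (hpos Z1 (le_of_lt hZ1pos))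
    have hbound : ∀ z, Z1 ≤ z → 2 * h 1 * z ^ (β-γ) ≤ K := by
      intro z hz
      have hz0 : (0:ℝ) < z := lt_of_lt_of_le hZ1pos hz
      have hV := hVanti (self_mem_Ici) (mem_Ici.mpr hz) hz
      have hlo := hlow z (le_trans hZ1ge1 hz)
      have hrp : 0 < z ^ β := Real.rpow_pos_of_pos hz0 _
      have step : 2 * h 1 * z ^ (-γ) * z ^ β ≤ z ^ β * Φ z := by
        nlinarith [hlo, hrp]
      have e1 : z ^ (-γ) * z ^ β = z ^ (β-γ) := by
        rw [← Real.rpow_add hz0]; ring_nf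
      calc 2 * h 1 * z ^ (β-γ) = 2 * h 1 * z ^ (-γ) * z ^ β := by rw [← e1]; ring
        _ ≤ z ^ β * Φ z := step
        _ ≤ K := hV
    set X : ℝ := (K/(2*h 1) + 1) ^ ((2:ℝ)/(1-γ)) with hXdef
    have hbase : (0:ℝ) < K/(2*h 1) + 1 := by positivity
    have hXnn : (0:ℝ) ≤ X := Real.rpow_nonneg hbase.le _
    have hzstar := hbound (max Z1 X) (le_max_left _ _)
    have hexp : β - γ = (1-γ)/2 := by rw [hβ]; ring
    have hXval : X ^ ((1-γ)/2) = K/(2*h 1) + 1 := by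
      have hne : (1:ℝ)-γ ≠ 0 := by linarith
      rw [hXdef, ← Real.rpow_mul hbase.le,
        show (2:ℝ)/(1-γ) * ((1-γ)/2) = 1 by field_simp, Real.rpow_one]
    have hmono' : X ^ ((1-γ)/2) ≤ (max Z1 X) ^ ((1-γ)/2) :=
      Real.rpow_le_rpow hXnn (le_max_right _ _) (by linarith)
    rw [hexp] at hzstar
    rw [hXval] at hmono'
    have h2h1 : 0 < 2 * h 1 := by linarith
    have : 2 * h 1 * (K/(2*h 1) + 1) ≤ K :=
      le_trans (mul_le_mul_of_nonneg_left hmono' h2h1.le) hzstar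
    have e2 : 2 * h 1 * (K/(2*h 1) + 1) = K + 2 * h 1 := by field_simp
    rw [e2] at this
    linarith
  obtain ⟨z0, hz0Z, hGz0⟩ := hGentry
  have hz0pos : (0:ℝ) < z0 := lt_of_lt_of_le hZ1pos hz0Z
  have hGinv : ∀ z, z0 ≤ z → 0 ≤ G z :=
    stay_nonneg hGdiff (fun t ht h0t => hGzero t (le_trans hz0Z ht) h0t) hGz0
  set z1 : ℝ := max z0 2 with hz1def
  have hz1z0 : z0 ≤ z1 := le_max_left _ _
  have hz12 : (2:ℝ) ≤ z1 := le_max_right _ _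
  have hz1pos : (0:ℝ) < z1 := by linarith
  have hz1ge1 : (1:ℝ) ≤ z1 := by linarith
  have keyineq : ∀ z, z1 ≤ z → z^4 * deriv h z ≤ (1-γ) * h z * (z^2+4) * z := by
    intro z hz
    have hz2 : (2:ℝ) ≤ z := le_trans hz12 hz
    have hz0 : (0:ℝ) < z := by linarith
    have hG' : 0 ≤ z * deriv Φ z + β * Φ z := hGinv z (le_trans hz1z0 hz)
    have hΦp := hpos z hz0.le
    rw [hhderiv z hz0.le]
    have hht : h z = deriv Φ z + z/2 * Φ z := rfl
    rw [hht]
    have hint1 : 0 ≤ (1-γ) * ((z^2+4) * (z*deriv Φ z + β*Φ z)) :=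
      mul_nonneg (by linarith) (mul_nonneg (by positivity) hG')
    have hb2 : 0 ≤ 2*z^2 - β*(z^2+4) := by nlinarith
    have hint2 : 0 ≤ (1-γ) * ((2*z^2 - β*(z^2+4)) * Φ z) :=
      mul_nonneg (by linarith) (mul_nonneg hb2 hΦp.le)
    nlinarith [hint1, hint2]
  -- E and U2
  have hED : ∀ z : ℝ, 0 < z → HasDerivAt (fun z => Real.exp (2*(1-γ)/z^2))
      (Real.exp (2*(1-γ)/z^2) * (-(4*(1-γ)/z^3))) z := by
    intro z hz
    have hz' : z ≠ 0 := ne_of_gt hz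
    have hf : HasDerivAt (fun z : ℝ => 2*(1-γ)/z^2)
        ((0 * z^2 - 2*(1-γ) * ((2:ℕ) * z^(2-1)))/(z^2)^2) z :=
      (hasDerivAt_const z (2*(1-γ))).div (hasDerivAt_pow 2 z) (pow_ne_zero 2 hz')
    have := hf.exp
    refine this.congr_deriv ?_
    field_simp
    ring
  have hUD : ∀ z : ℝ, 0 < z → HasDerivAt (fun z => (h z * z ^ (γ-1)) * Real.exp (2*(1-γ)/z^2))
      ((deriv h z * z ^ (γ-1) + h z * ((γ-1) * z ^ (γ-2))) * Real.exp (2*(1-γ)/z^2)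
        + (h z * z ^ (γ-1)) * (Real.exp (2*(1-γ)/z^2) * (-(4*(1-γ)/z^3)))) z := by
    intro z hz
    exact (hLD z hz).mul (hED z hz)
  have hUanti : AntitoneOn (fun z => (h z * z ^ (γ-1)) * Real.exp (2*(1-γ)/z^2)) (Ici z1) := by
    refine antitoneOn_of_deriv_nonpos (convex_Ici _) ?_ ?_ ?_
    · exact fun t ht => ((hUD t (lt_of_lt_of_le hz1pos ht)).continuousAt).continuousWithinAt
    · intro t ht
      rw [interior_Ici] at ht
      exact ((hUD t (lt_trans hz1pos ht)).differentiableAt).differentiableWithinAt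
    · intro t ht
      rw [interior_Ici] at ht
      have ht0 : (0:ℝ) < t := lt_trans hz1pos ht
      rw [(hUD t ht0).deriv]
      have hbr := keyineq t (le_of_lt ht)
      have e1 : t ^ (γ-1) = t ^ (γ-2) * t := by
        rw [show γ-(1:ℝ) = γ-2+1 by ring, Real.rpow_add_one (ne_of_gt ht0)]
      set D := (deriv h t * t ^ (γ-1) + h t * ((γ-1) * t ^ (γ-2))) * Real.exp (2*(1-γ)/t^2)
        + (h t * t ^ (γ-1)) * (Real.exp (2*(1-γ)/t^2) * (-(4*(1-γ)/t^3))) with hDdef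
    -- show D ≤ 0 via D * t^3 ≤ 0
      have hDz3 : D * t^3 = Real.exp (2*(1-γ)/t^2) * t^(γ-2) *
          (t^4 * deriv h t - (1-γ) * h t * (t^2+4) * t) := by
        rw [hDdef, e1]
        field_simp
        ring
      have hfac : 0 ≤ Real.exp (2*(1-γ)/t^2) * t^(γ-2) :=
        mul_nonneg (Real.exp_pos _).le (Real.rpow_pos_of_pos ht0 _).le
      have hDt3 : D * t^3 ≤ 0 := by
        rw [hDz3]
        exact mul_nonpos_of_nonneg_of_nonpos hfac (by linarith)
      by_contra hDpos
      push_neg at hDpos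
      nlinarith [pow_pos ht0 3]
  have hUpos : 0 < (h z1 * z1 ^ (γ-1)) * Real.exp (2*(1-γ)/z1^2) :=
    mul_pos (mul_pos (hhpos z1 hz1pos) (Real.rpow_pos_of_pos hz1pos _)) (Real.exp_pos _)
  set U1 : ℝ := (h z1 * z1 ^ (γ-1)) * Real.exp (2*(1-γ)/z1^2) with hU1def
  have hhup : ∀ z, z1 ≤ z → h z * z ^ (γ-1) ≤ U1 := by
    intro z hz
    have hz0 : (0:ℝ) < z := lt_of_lt_of_le hz1pos hz
    have hU := hUanti (self_mem_Ici) (mem_Ici.mpr hz) hz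
    have hE1 : (1:ℝ) ≤ Real.exp (2*(1-γ)/z^2) := by
      refine Real.one_le_exp ?_
      have : (0:ℝ) < 1-γ := by linarith
      positivity
    have hnn : 0 ≤ h z * z ^ (γ-1) :=
      mul_nonneg (hhpos z hz0).le (Real.rpow_pos_of_pos hz0 _).le
    have hU' : (h z * z ^ (γ-1)) * Real.exp (2*(1-γ)/z^2) ≤ U1 := hU
    calc h z * z ^ (γ-1) ≤ (h z * z ^ (γ-1)) * Real.exp (2*(1-γ)/z^2) :=
          le_mul_of_one_le_right hnn hE1
      _ ≤ U1 := hU'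
  have hΦup : ∀ z, z1 ≤ z → Φ z ≤ (4 * U1) * z ^ (-γ) := by
    intro z hz
    have hz2 : (2:ℝ) ≤ z := le_trans hz12 hz
    have hz0 : (0:ℝ) < z := by linarith
    have hG' : 0 ≤ z * deriv Φ z + β * Φ z := hGinv z (le_trans hz1z0 hz)
    have hΦp := hpos z hz0.le
    have hht : h z = deriv Φ z + z/2 * Φ z := rfl
    have hq : z^2 * Φ z ≤ 4 * (z * h z) := by
      rw [hht]
      have hb : 0 ≤ (z^2 - 4*β) * Φ z := mul_nonneg (by nlinarith) hΦp.le
      nlinarith [hG']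
    have e2 : z ^ (γ-1) * z ^ (1-γ) = 1 := by
      rw [← Real.rpow_add hz0]; norm_num
    have hz1γ : 0 < z ^ (1-γ) := Real.rpow_pos_of_pos hz0 _
    have key2 : h z ≤ U1 * z ^ (1-γ) := by
      calc h z = (h z * z ^ (γ-1)) * z ^ (1-γ) := by rw [mul_assoc, e2, mul_one]
        _ ≤ U1 * z ^ (1-γ) := mul_le_mul_of_nonneg_right (hhup z hz) hz1γ.le
    have e3 : z ^ (1-γ) = z ^ (-γ) * z := by
      rw [show (1:ℝ)-γ = -γ+1 by ring, Real.rpow_add_one (ne_of_gt hz0)]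
    have hzz : z^2 * Φ z ≤ z^2 * ((4 * U1) * z ^ (-γ)) := by
      have : 4 * (z * h z) ≤ 4 * (z * (U1 * z ^ (1-γ))) := by nlinarith [key2, hz0]
      rw [e3] at this
      nlinarith [hq, this]
    exact le_of_mul_le_mul_left hzz (by positivity)
  -- compact part
  obtain ⟨m, hmem, hmax⟩ := isCompact_Icc.exists_isMaxOn (s := Icc 1 z1)
    ⟨1, left_mem_Icc.mpr hz1ge1⟩ hΦcont.continuousOn
  have hMpos : 0 < Φ m := hpos m (le_trans zero_le_one hmem.1)
  set Cf : ℝ := max (4 * U1) (Φ m * z1 ^ γ) with hCf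
  have hCpos : 0 < Cf := lt_of_lt_of_le (by positivity) (le_max_left _ _)
  refine ⟨2 * h 1, by linarith, Cf, hCpos, fun z hz => ⟨hlow z hz, ?_⟩⟩
  have hz0 : (0:ℝ) < z := by linarith
  have hrpneg : 0 < z ^ (-γ) := Real.rpow_pos_of_pos hz0 _
  rcases le_or_gt z z1 with hle | hlt
  · have h1 : Φ z ≤ Φ m := hmax ⟨hz, hle⟩
    have hzg : z ^ γ ≤ z1 ^ γ := Real.rpow_le_rpow hz0.le hle hγ0.le
    have e : z ^ γ * z ^ (-γ) = 1 := by
      rw [← Real.rpow_add hz0]; norm_num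
    have h2 : (1:ℝ) ≤ z1 ^ γ * z ^ (-γ) := by nlinarith [hzg, hrpneg, e]
    calc Φ z ≤ Φ m := h1
      _ = Φ m * 1 := by ring
      _ ≤ Φ m * (z1 ^ γ * z ^ (-γ)) := mul_le_mul_of_nonneg_left h2 hMpos.le
      _ = (Φ m * z1 ^ γ) * z ^ (-γ) := by ring
      _ ≤ Cf * z ^ (-γ) := mul_le_mul_of_nonneg_right (le_max_right _ _) hrpneg.le
  · exact le_trans (hΦup z hlt.le)
      (mul_le_mul_of_nonneg_right (le_max_left _ _) hrpneg.le)
end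

section
/- Let γ ∈ (0,1) and let Φ solve Φ''(z) + (z/2)Φ'(z) + (γ/2)Φ(z) = 0 with Φ(0)=1, Φ'(0)=0. Then there exist c > 0 and C > 0 such that −C·z^(−γ−1) ≤ Φ'(z) ≤ −c·z^(−γ−1) for all z ≥ 1. -/
lemma incr {f g : ℝ → ℝ} {a b : ℝ} (hab : a ≤ b)
    (hf : ∀ z ∈ Set.Icc a b, HasDerivAt f (g z) z)
    (hg : ∀ z ∈ Set.Ioo a b, 0 ≤ g z) : f a ≤ f b := by
  have := monotoneOn_of_deriv_nonneg (convex_Icc a b)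
    (fun z hz => (hf z hz).continuousAt.continuousWithinAt)
    (by intro z hz; rw [interior_Icc] at hz
        exact (hf z (Set.Ioo_subset_Icc_self hz)).differentiableAt.differentiableWithinAt)
    (by intro z hz; rw [interior_Icc] at hz
        rw [(hf z (Set.Ioo_subset_Icc_self hz)).deriv]; exact hg z hz)
  exact this (Set.left_mem_Icc.2 hab) (Set.right_mem_Icc.2 hab) hab

lemma decr {f g : ℝ → ℝ} {a b : ℝ} (hab : a ≤ b)
    (hf : ∀ z ∈ Set.Icc a b, HasDerivAt f (g z) z)
    (hg : ∀ z ∈ Set.Ioo a b, g z ≤ 0) : f b ≤ f a := by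
  have := incr (f := fun z => -f z) (g := fun z => -g z) hab
    (fun z hz => (hf z hz).neg) (fun z hz => by simpa using hg z hz)
  simpa using this

lemma incr_strict {f g : ℝ → ℝ} {a b : ℝ} (hab : a < b)
    (hf : ∀ z ∈ Set.Icc a b, HasDerivAt f (g z) z)
    (hg : ∀ z ∈ Set.Ioo a b, 0 < g z) : f a < f b := by
  have := strictMonoOn_of_deriv_pos (convex_Icc a b)
    (fun z hz => (hf z hz).continuousAt.continuousWithinAt)
    (by intro z hz; rw [interior_Icc] at hz
        rw [(hf z (Set.Ioo_subset_Icc_self hz)).deriv]; exact hg z hz)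
  exact this (Set.left_mem_Icc.2 hab.le) (Set.right_mem_Icc.2 hab.le) hab

lemma decr_strict {f g : ℝ → ℝ} {a b : ℝ} (hab : a < b)
    (hf : ∀ z ∈ Set.Icc a b, HasDerivAt f (g z) z)
    (hg : ∀ z ∈ Set.Ioo a b, g z < 0) : f b < f a := by
  have := incr_strict (f := fun z => -f z) (g := fun z => -g z) hab
    (fun z hz => (hf z hz).neg) (fun z hz => by simpa using hg z hz)
  simpa using this

set_option maxHeartbeats 4000000 in
/-- Let `γ ∈ (0,1)` and `Φ` solve `Φ'' + (z/2)Φ' + (γ/2)Φ = 0` with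
`Φ(0)=1`, `Φ'(0)=0`. Then there are `c, C > 0` with
`−C z^(−γ−1) ≤ Φ'(z) ≤ −c z^(−γ−1)` for all `z ≥ 1`. -/
theorem stmt8 (γ : ℝ) (hγ : γ ∈ Set.Ioo (0 : ℝ) 1) (Φ : ℝ → ℝ)
    (hsmooth : ContDiff ℝ 2 Φ)
    (hode : ∀ z ≥ (0 : ℝ), deriv (deriv Φ) z + z / 2 * deriv Φ z + γ / 2 * Φ z = 0)
    (h0 : Φ 0 = 1) (h0' : deriv Φ 0 = 0) :
    ∃ c > (0 : ℝ), ∃ C > (0 : ℝ), ∀ z ≥ (1 : ℝ),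
      -C * z ^ (-γ - 1) ≤ deriv Φ z ∧ deriv Φ z ≤ -c * z ^ (-γ - 1) := by
  obtain ⟨hγ0, hγ1⟩ := hγ
  have hΦd : Differentiable ℝ Φ := hsmooth.differentiable (by norm_num)
  have hφd : Differentiable ℝ (deriv Φ) := by
    have h2 : ContDiff ℝ ((1:ℕ∞)+1) Φ := by convert hsmooth using 2; rfl
    rw [contDiff_succ_iff_deriv] at h2
    exact h2.2.2.differentiable (by norm_num)
  have d1 : ∀ z : ℝ, HasDerivAt Φ (deriv Φ z) z := fun z => (hΦd z).hasDerivAt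
  have d2 : ∀ z : ℝ, HasDerivAt (deriv Φ) (deriv (deriv Φ) z) z := fun z => (hφd z).hasDerivAt
  have hode' : ∀ z, 0 ≤ z → deriv (deriv Φ) z = -(z/2 * deriv Φ z) - γ/2 * Φ z := by
    intro z hz; have := hode z hz; linarith
  set E : ℝ → ℝ := fun z => Real.exp (z^2/4) with hEdef
  have hEpos : ∀ z, 0 < E z := fun z => Real.exp_pos _
  have hE : ∀ z : ℝ, HasDerivAt E (z/2 * E z) z := by
    intro z
    have h1 : HasDerivAt (fun z : ℝ => z^2/4) (z/2) z := by
      have := (hasDerivAt_pow 2 z).div_const 4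
      convert (config := { preTransparency := .default }) this using 1; push_cast; ring
    have := h1.exp
    convert this using 1; rw [hEdef]; ring
  -- the four basic comparison functions
  set N : ℝ → ℝ := fun z => 2 * deriv Φ z + z * Φ z with hNdef
  set B : ℝ → ℝ := fun z => E z * deriv Φ z with hBdef
  set H : ℝ → ℝ := fun z => E z * Φ z with hHdef
  set A : ℝ → ℝ := fun z => E z * (z * deriv Φ z + γ * Φ z) with hAdef
  have hN : ∀ z, 0 ≤ z → HasDerivAt N ((1-γ) * Φ z) z := by
    intro z hz
    have h := ((d2 z).const_mul 2).add ((hasDerivAt_id z).mul (d1 z))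
    simp only [id_eq] at h
    rw [hode' z hz] at h
    convert (config := { preTransparency := .default }) h using 1; ring
  have hB : ∀ z, 0 ≤ z → HasDerivAt B (-(γ/2) * (E z * Φ z)) z := by
    intro z hz
    have h := (hE z).mul (d2 z)
    rw [hode' z hz] at h
    convert (config := { preTransparency := .default }) h using 1; ring
  have hH : ∀ z : ℝ, HasDerivAt H (1/2 * (E z * N z)) z := by
    intro z
    have h := (hE z).mul (d1 z)
    convert (config := { preTransparency := .default }) h using 1; rw [hNdef]; ring
  have hA : ∀ z, 0 ≤ z → HasDerivAt A ((1+γ) * (E z * deriv Φ z)) z := by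
    intro z hz
    have h := (hE z).mul (((hasDerivAt_id z).mul (d2 z)).add ((d1 z).const_mul γ))
    simp only [id_eq, Pi.add_apply, Pi.mul_apply] at h
    rw [hode' z hz] at h
    convert (config := { preTransparency := .default }) h using 1; ring
  have hB0 : B 0 = 0 := by rw [hBdef]; simp [h0']
  have hN0 : N 0 = 0 := by rw [hNdef]; simp [h0']
  have hH0 : H 0 = 1 := by rw [hHdef, hEdef]; simp [h0]
  have hA0 : A 0 = γ := by rw [hAdef, hEdef]; simp [h0, h0']
  -- positivity of Φ
  have hpos : ∀ z, 0 ≤ z → 0 < Φ z := by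
    by_contra hcon
    push_neg at hcon
    obtain ⟨z0, hz00, hz0Φ⟩ := hcon
    have hbdd : BddBelow {z : ℝ | 0 ≤ z ∧ Φ z ≤ 0} := ⟨0, fun x hx => hx.1⟩
    have hSne : {z : ℝ | 0 ≤ z ∧ Φ z ≤ 0}.Nonempty := ⟨z0, hz00, hz0Φ⟩
    have hSc : IsClosed {z : ℝ | 0 ≤ z ∧ Φ z ≤ 0} := by
      have : {z : ℝ | 0 ≤ z ∧ Φ z ≤ 0} = Set.Ici 0 ∩ Φ ⁻¹' (Set.Iic 0) := rfl
      rw [this]; exact isClosed_Ici.inter (isClosed_Iic.preimage hΦd.continuous)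
    set t := sInf {z : ℝ | 0 ≤ z ∧ Φ z ≤ 0} with htdef
    obtain ⟨ht0, htΦ⟩ := hSc.csInf_mem hSne hbdd
    have htpos : 0 < t := by
      rcases ht0.lt_or_eq with h | h
      · exact h
      · exfalso; rw [← h, h0] at htΦ; linarith
    have hΦlt : ∀ z, 0 ≤ z → z < t → 0 < Φ z := by
      intro z hz hzt
      by_contra hle; push_neg at hle
      exact absurd (csInf_le hbdd ⟨hz, hle⟩) (not_le.2 hzt)
    have hNnn : ∀ z, 0 ≤ z → z < t → 0 ≤ N z := by
      intro z hz hzt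
      rw [← hN0]
      exact incr hz (fun x hx => hN x hx.1) (fun x hx => by
        have := hΦlt x hx.1.le (hx.2.trans hzt)
        nlinarith)
    have hHt : 1 ≤ H t := by
      rw [← hH0]
      exact incr htpos.le (fun x _ => hH x) (fun x hx => by
        have h1 := hNnn x hx.1.le hx.2
        have h2 := (hEpos x).le
        positivity)
    have : 0 < Φ t := by
      have h2 := hEpos t
      rw [hHdef] at hHt; simp only at hHt
      nlinarith [Real.exp_le_exp.2 (le_refl (t^2/4))]
    linarith
  -- basic sign facts
  have hBanti : ∀ x y : ℝ, 0 ≤ x → x ≤ y → B y ≤ B x := by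
    intro x y hx hxy
    exact decr hxy (fun u hu => hB u (hx.trans hu.1)) (fun u hu => by
      have h1 := hpos u (hx.trans hu.1.le); have h2 := hEpos u
      nlinarith [mul_pos hγ0 (mul_pos h2 h1)])
  have hφle : ∀ z, 0 ≤ z → deriv Φ z ≤ 0 := by
    intro z hz
    have hBz : B z ≤ B 0 := hBanti 0 z le_rfl hz
    rw [hB0] at hBz
    have h2 := hEpos z
    rw [hBdef] at hBz; simp only at hBz
    nlinarith
  have hΦle1 : ∀ z, 0 ≤ z → Φ z ≤ 1 := by
    intro z hz
    have h := decr hz (fun x _ => d1 x) (fun x hx => hφle x hx.1.le)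
    rwa [h0] at h
  have hN1 : 0 < N 1 := by
    have h := incr_strict one_pos (fun x hx => hN x hx.1) (fun x hx => by
      have := hpos x hx.1.le; nlinarith [mul_pos (show (0:ℝ) < 1 - γ by linarith) this])
    rwa [hN0] at h
  have hB1 : B 1 < 0 := by
    have h := decr_strict one_pos (fun x hx => hB x hx.1) (fun x hx => by
      have h1 := hpos x hx.1.le; have h2 := hEpos x
      nlinarith [mul_pos hγ0 (mul_pos h2 h1)])
    rwa [hB0] at h
  have hAle : ∀ z, 0 ≤ z → A z ≤ γ := by
    intro z hz
    have h := decr hz (fun x hx => hA x hx.1) (fun x hx => by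
      have h1 := hφle x hx.1.le; have h2 := hEpos x
      nlinarith [mul_nonneg h2.le (neg_nonneg.2 h1)])
    rwa [hA0] at h
  -- rpow helpers
  have hr1 : ∀ z : ℝ, 0 < z → z ^ (γ-1) = z ^ γ / z := by
    intro z hz; rw [Real.rpow_sub hz, Real.rpow_one]
  have hr3 : ∀ z : ℝ, 0 < z → z ^ (-γ) = 1 / z ^ γ := by
    intro z hz; rw [Real.rpow_neg hz.le, one_div]
  have hr4 : ∀ z : ℝ, 0 < z → z ^ (1-γ) = z / z ^ γ := by
    intro z hz; rw [Real.rpow_sub hz, Real.rpow_one]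
  have hr5 : ∀ z : ℝ, 0 < z → z ^ (-γ-1) = 1 / (z ^ γ * z) := by
    intro z hz
    rw [show (-γ-1 : ℝ) = -(γ+1) by ring, Real.rpow_neg hz.le, Real.rpow_add hz,
      Real.rpow_one, one_div]
  have hr6 : ∀ z : ℝ, 0 < z → z ^ (-γ-2) = 1 / (z ^ γ * z^2) := by
    intro z hz
    rw [show (-γ-2 : ℝ) = -(γ+2) by ring, Real.rpow_neg hz.le, Real.rpow_add hz,
      show ((2:ℝ):ℝ) = ((2:ℕ):ℝ) by norm_num, Real.rpow_natCast, one_div]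
  have hrpos : ∀ (r : ℝ) (z : ℝ), 0 < z → 0 < z ^ r := fun r z hz => Real.rpow_pos_of_pos hz r
  -- upper bound for Φ : z^γ Φ z ≤ 3 on [1,∞)
  have hEneg : ∀ x : ℝ, HasDerivAt (fun x : ℝ => Real.exp (-(x^2/4))) (-(x/2) * Real.exp (-(x^2/4))) x := by
    intro x
    have h1 : HasDerivAt (fun x : ℝ => -(x^2/4)) (-(x/2)) x := by
      have := ((hasDerivAt_pow 2 x).div_const 4).neg
      convert (config := { preTransparency := .default }) this using 1; push_cast; ring
    have := h1.exp; convert this using 1; ring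
  have hΦub : ∀ z, 1 ≤ z → z ^ γ * Φ z ≤ 3 := by
    intro z hz1
    have hv : ∀ x ∈ Set.Icc 1 z, HasDerivAt (fun x : ℝ => x ^ γ * Φ x + 2*γ*Real.exp (-(x^2/4)))
        (γ * x^(γ-1) * Φ x + x^γ * deriv Φ x + 2*γ*(-(x/2) * Real.exp (-(x^2/4)))) x := by
      intro x hx
      have hx0 : x ≠ 0 := by have := hx.1; intro h; rw [h] at this; linarith
      have h := ((Real.hasDerivAt_rpow_const (p := γ) (Or.inl hx0)).mul (d1 x)).add
        ((hEneg x).const_mul (2*γ))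
      convert (config := { preTransparency := .default }) h using 1 <;> ring
    have hvm := decr hz1 hv ?_
    · rw [Real.one_rpow] at hvm
      have h1 : Φ 1 ≤ 1 := hΦle1 1 (by norm_num)
      have h2 : Real.exp (-((1:ℝ)^2/4)) ≤ 1 := Real.exp_le_one_iff.2 (by norm_num)
      have h3 : (0:ℝ) ≤ Real.exp (-(z^2/4)) := (Real.exp_pos _).le
      nlinarith
    · intro x hx
      have hx1 : (1:ℝ) < x := hx.1
      have hx0 : (0:ℝ) < x := by linarith
      have hA' : x * deriv Φ x + γ * Φ x ≤ γ * Real.exp (-(x^2/4)) := by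
        have h := hAle x hx0.le
        rw [hAdef] at h; simp only at h
        rw [hEdef] at h; simp only at h
        have h2 := Real.exp_pos (x^2/4)
        rw [Real.exp_neg, ← div_eq_mul_inv, le_div_iff₀ h2]
        linarith [h, mul_comm (Real.exp (x^2/4)) (x * deriv Φ x + γ * Φ x)]
      have ht1 : x ^ (γ-1) ≤ 1 := Real.rpow_le_one_of_one_le_of_nonpos hx1.le (by linarith)
      have ht0 : 0 < x ^ (γ-1) := hrpos _ x hx0
      have hxg : x ^ γ = x ^ (γ-1) * x := by rw [hr1 x hx0]; field_simp
      rw [hxg]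
      have hexp := Real.exp_pos (-(x^2/4))
      nlinarith [mul_le_mul_of_nonneg_left hA' ht0.le,
        mul_nonneg (mul_nonneg hγ0.le hexp.le) (show (0:ℝ) ≤ x - x^(γ-1) by linarith)]
  -- N lower bound: N 1 ≤ x^(γ-1) * N x for x ≥ 1
  have hgmono : ∀ x, 1 ≤ x → N 1 ≤ x^(γ-1) * N x := by
    intro x hx1
    have h := incr hx1 (fun u hu => by
        have hu0 : (0:ℝ) < u := lt_of_lt_of_le one_pos hu.1
        exact (Real.hasDerivAt_rpow_const (p := γ-1) (Or.inl hu0.ne')).mul (hN u hu0.le))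
      (fun u hu => by
        have hu0 : (0:ℝ) < u := lt_of_lt_of_le one_pos hu.1.le
        have hid : u ^ (γ - 1) = u ^ (γ-2) * u := by
          rw [show γ-1 = (γ-2)+1 by ring, Real.rpow_add_one hu0.ne']
        rw [show γ-1-1 = γ-2 by ring, hid, hNdef]; simp only
        nlinarith [mul_nonneg (mul_nonneg (show (0:ℝ) ≤ 1-γ by linarith)
          (neg_nonneg.2 (hφle u hu0.le))) (hrpos (γ-2) u hu0).le])
    simp only [Pi.mul_apply] at h
    rwa [Real.one_rpow, one_mul] at h
  have hNlb : ∀ x, 1 ≤ x → N 1 * (x^(-γ) * x) ≤ N x := by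
    intro x hx1
    have hx0 : (0:ℝ) < x := lt_of_lt_of_le one_pos hx1
    have hxx : x^(γ-1) * (x^(-γ) * x) = 1 := by
      rw [hr1 x hx0, hr3 x hx0]; field_simp
    have h := mul_le_mul_of_nonneg_right (hgmono x hx1)
      (mul_nonneg (hrpos (-γ) x hx0).le hx0.le)
    calc N 1 * (x^(-γ) * x) ≤ (x^(γ-1) * N x) * (x^(-γ) * x) := h
      _ = N x * (x^(γ-1) * (x^(-γ) * x)) := by ring
      _ = N x := by rw [hxx, mul_one]
  -- Φ lower bound : N 1 * z^(-γ) ≤ Φ z for z ≥ 1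
  have hΦlb : ∀ z, 1 ≤ z → N 1 * z^(-γ) ≤ Φ z := by
    intro z hz1
    have hz0 : (0:ℝ) < z := lt_of_lt_of_le one_pos hz1
    have hu : ∀ x ∈ Set.Icc 1 z, HasDerivAt (fun x : ℝ => H x - N 1 * (x^(-γ) * E x))
        (1/2 * (E x * N x) - N 1 * ((-γ * x^(-γ-1)) * E x + x^(-γ) * (x/2 * E x))) x := by
      intro x hx
      have hx0 : (0:ℝ) < x := lt_of_lt_of_le one_pos hx.1
      have h := (hH x).sub ((((Real.hasDerivAt_rpow_const (p := -γ) (Or.inl hx0.ne')).mul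
        (hE x))).const_mul (N 1))
      convert (config := { preTransparency := .default }) h using 1 <;> ring
    have hsign : ∀ x ∈ Set.Ioo (1:ℝ) z,
        0 ≤ 1/2 * (E x * N x) - N 1 * ((-γ * x^(-γ-1)) * E x + x^(-γ) * (x/2 * E x)) := by
      intro x hx
      have hx0 : (0:ℝ) < x := lt_of_lt_of_le one_pos hx.1.le
      have h5 := hNlb x hx.1.le
      have e1 := mul_le_mul_of_nonneg_left h5 (hEpos x).le
      have e2 := mul_pos (mul_pos hN1 hγ0) (mul_pos (hrpos (-γ-1) x hx0) (hEpos x))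
      ring_nf at e1 e2 ⊢
      linarith [e1, e2]
    have hmono : H 1 - N 1 * ((1:ℝ)^(-γ) * E 1) ≤ H z - N 1 * (z^(-γ) * E z) :=
      incr hz1 hu hsign
    rw [Real.one_rpow] at hmono
    have hφ1 : deriv Φ 1 ≤ 0 := hφle 1 (by norm_num)
    have hνΦ1 : N 1 ≤ Φ 1 := by rw [hNdef]; simp only; linarith
    have hE1 := hEpos 1
    have hEz := hEpos z
    rw [hHdef] at hmono; simp only at hmono
    nlinarith [mul_nonneg (sub_nonneg.2 hνΦ1) hE1.le]
  -- numeric exp facts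
  have he1 : Real.exp 1 < 2.7182818286 := Real.exp_one_lt_d9
  have he3 : Real.exp ((9:ℝ)/4) ≤ 20.1 := by
    have h1 : Real.exp ((9:ℝ)/4) ≤ Real.exp 3 := Real.exp_le_exp.2 (by norm_num)
    have h2 : Real.exp (3:ℝ) = Real.exp 1 ^ (3:ℕ) := by
      rw [← Real.exp_nat_mul]; norm_num
    have h4 : Real.exp 1 ^ (3:ℕ) ≤ (2.7182818286:ℝ)^(3:ℕ) :=
      pow_le_pow_left₀ (Real.exp_pos 1).le he1.le 3
    have h5 : ((2.7182818286:ℝ))^(3:ℕ) ≤ 20.1 := by norm_num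
    linarith
  have he14 : Real.exp ((1:ℝ)/4) ≤ 2 := by
    have h4 : Real.exp ((1:ℝ)/4) ^ (4:ℕ) = Real.exp 1 := by
      rw [← Real.exp_nat_mul]; norm_num
    nlinarith [Real.exp_pos ((1:ℝ)/4), h4, he1, sq_nonneg (Real.exp ((1:ℝ)/4) - 2),
      sq_nonneg (Real.exp ((1:ℝ)/4)^2 - 2)]
  have hE2 : ∀ z : ℝ, z^2 ≤ 2 * E z := by
    intro z
    have h1 : E z = Real.exp (z^2/8) ^ (2:ℕ) := by
      rw [hEdef]; simp only
      rw [show z^2/4 = ((2:ℕ):ℝ)*(z^2/8) by push_cast; ring, Real.exp_nat_mul]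
    have h2 := Real.add_one_le_exp (z^2/8)
    nlinarith [sq_nonneg (1 - z^2/8), Real.exp_pos (z^2/8)]
  have hE4 : ∀ z : ℝ, z^4/64 ≤ E z := by
    intro z
    have h1 : E z = Real.exp (z^2/8) ^ (2:ℕ) := by
      rw [hEdef]; simp only
      rw [show z^2/4 = ((2:ℕ):ℝ)*(z^2/8) by push_cast; ring, Real.exp_nat_mul]
    have h2 := Real.add_one_le_exp (z^2/8)
    nlinarith [sq_nonneg (z^2/8), Real.exp_pos (z^2/8), sq_nonneg z]
  have hz2 : ∀ z : ℝ, 1 ≤ z → z^(γ+1) ≤ z^2 := by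
    intro z hz1
    have h1 : z^(γ+1) ≤ z^(2:ℝ) := Real.rpow_le_rpow_of_exponent_le hz1 (by linarith)
    rwa [show (2:ℝ) = ((2:ℕ):ℝ) by norm_num, Real.rpow_natCast] at h1
  have hrzid : ∀ z : ℝ, 0 < z → z^(-γ-1) * z^(γ+1) = 1 := by
    intro z hz0; rw [← Real.rpow_add hz0]; norm_num
  have hkey : ∀ z, 1 ≤ z → 1 ≤ 2 * (z^(-γ-1) * E z) := by
    intro z hz1
    have hz0 : (0:ℝ) < z := lt_of_lt_of_le one_pos hz1
    calc (1:ℝ) = z^(-γ-1) * z^(γ+1) := (hrzid z hz0).symm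
      _ ≤ z^(-γ-1) * (2*E z) :=
          mul_le_mul_of_nonneg_left ((hz2 z hz1).trans (hE2 z)) (hrpos _ z hz0).le
      _ = 2 * (z^(-γ-1) * E z) := by ring
  -- B 3 lower bound
  have hB3 : -(3/2) * Real.exp ((9:ℝ)/4) ≤ B 3 := by
    have hk : ∀ x ∈ Set.Icc (0:ℝ) 3, HasDerivAt (fun x : ℝ => B x + Real.exp ((9:ℝ)/4)/2 * x)
        (-(γ/2)*(E x*Φ x) + Real.exp ((9:ℝ)/4)/2) x := by
      intro x hx
      have h := (hB x hx.1).add ((hasDerivAt_id x).const_mul (Real.exp ((9:ℝ)/4)/2))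
      convert (config := { preTransparency := .default }) h using 1 <;> simp [id_eq] <;> ring
    have hmono : B 0 + Real.exp ((9:ℝ)/4)/2 * 0 ≤ B 3 + Real.exp ((9:ℝ)/4)/2 * 3 :=
      incr (by norm_num) hk (by
        intro x hx
        have hx3 : x < 3 := hx.2
        have hx0 : 0 < x := hx.1
        have hEx : E x ≤ Real.exp ((9:ℝ)/4) := by
          rw [hEdef]; simp only; apply Real.exp_le_exp.2; nlinarith
        have h1 := hΦle1 x hx0.le
        have h2 := (hpos x hx0.le).le
        have h3 := (hEpos x).le
        have q1 : E x * Φ x ≤ Real.exp ((9:ℝ)/4) := by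
          nlinarith [Real.exp_pos ((9:ℝ)/4)]
        have q2 : γ * (E x * Φ x) ≤ 1 * Real.exp ((9:ℝ)/4) :=
          mul_le_mul hγ1.le q1 (mul_nonneg h3 h2) (by norm_num)
        linarith)
    rw [hB0] at hmono
    linarith
  -- global lower bound for B on [1,∞)
  have hBlow : ∀ z, 1 ≤ z → -(3/2)*Real.exp ((9:ℝ)/4) - 6*(z^(-γ-1)*E z) ≤ B z := by
    intro z hz1
    have hz0 : (0:ℝ) < z := lt_of_lt_of_le one_pos hz1
    have hrEpos : 0 < z^(-γ-1)*E z := mul_pos (hrpos _ z hz0) (hEpos z)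
    rcases le_total z 3 with hz3 | hz3
    · have h := hBanti z 3 hz0.le hz3
      nlinarith
    · -- monotone comparison on [3, z]
      have hw : ∀ x ∈ Set.Icc (3:ℝ) z, HasDerivAt (fun x : ℝ => B x + 6*(x^(-γ-1) * E x))
          (-(γ/2)*(E x*Φ x) - (6*(γ+1))*(x^(-γ-2)*E x) + 3*(x^(-γ)*E x)) x := by
        intro x hx
        have hx0 : (0:ℝ) < x := lt_of_lt_of_le (by norm_num) hx.1
        have h := (hB x hx0.le).add
          (((Real.hasDerivAt_rpow_const (p := -γ-1) (Or.inl hx0.ne')).mul (hE x)).const_mul 6)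
        have hid : x^(-γ) = x^(-γ-1)*x := by
          rw [← Real.rpow_add_one hx0.ne' (-γ-1)]; ring_nf
        convert (config := { preTransparency := .default }) h using 1
        rw [show (-γ-1-1:ℝ) = -γ-2 by ring, hid]
        ring
      have hsign : ∀ x ∈ Set.Ioo (3:ℝ) z,
          0 ≤ -(γ/2)*(E x*Φ x) - (6*(γ+1))*(x^(-γ-2)*E x) + 3*(x^(-γ)*E x) := by
        intro x hx
        have hx3 : (3:ℝ) < x := hx.1
        have hx1 : (1:ℝ) ≤ x := by linarith
        have hx0 : (0:ℝ) < x := by linarith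
        have hub := hΦub x hx1
        have hp : (0:ℝ) < x^γ := hrpos γ x hx0
        have hEx := hEpos x
        have hΦx := (hpos x hx0.le).le
        -- multiply out by x^γ * x^2
        have key : 0 ≤ (-(γ/2)*(E x*Φ x) - (6*(γ+1))*(x^(-γ-2)*E x) + 3*(x^(-γ)*E x)) * (x^γ * x^2) := by
          have hexpand : (-(γ/2)*(E x*Φ x) - (6*(γ+1))*(x^(-γ-2)*E x) + 3*(x^(-γ)*E x)) * (x^γ * x^2)
              = -(γ/2)*(E x*(Φ x*x^γ))*x^2 - (6*(γ+1))*E x + 3*(E x*x^2) := by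
            rw [hr6 x hx0, hr3 x hx0]
            field_simp
          rw [hexpand]
          have hub' : Φ x * x^γ ≤ 3 := by linarith [hub, mul_comm (x^γ) (Φ x)]
          have t1 : E x * (Φ x * x^γ) ≤ 3 * E x := by
            have := mul_le_mul_of_nonneg_left hub' hEx.le; linarith
          have t2 : γ * (E x * (Φ x * x^γ)) ≤ 1 * (3 * E x) :=
            mul_le_mul hγ1.le t1 (mul_nonneg hEx.le (mul_nonneg hΦx hp.le)) (by norm_num)
          have t3 : γ * (E x * (Φ x * x^γ)) * x^2 ≤ 1 * (3 * E x) * x^2 :=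
            mul_le_mul_of_nonneg_right t2 (sq_nonneg x)
          have h9 : (9:ℝ) ≤ x^2 := by nlinarith
          have t4 : 9 * E x ≤ x^2 * E x := mul_le_mul_of_nonneg_right h9 hEx.le
          have t5 : 0 ≤ (1-γ) * E x := mul_nonneg (by linarith) hEx.le
          nlinarith [t3, t4, t5]
        have hpx : (0:ℝ) < x^γ * x^2 := by positivity
        exact (mul_nonneg_iff_of_pos_right hpx).1 key
      have hmono : B 3 + 6*((3:ℝ)^(-γ-1) * E 3) ≤ B z + 6*(z^(-γ-1) * E z) :=
        incr hz3 hw hsign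
      have h30 : 0 < (3:ℝ)^(-γ-1) * E 3 := mul_pos (hrpos _ 3 (by norm_num)) (hEpos 3)
      nlinarith
  -- upper bound for B on [1,∞): B z ≤ 2*(γ*N 1) - (γ*N 1)*(z^(-γ-1)*E z)
  have hBup : ∀ z, 1 ≤ z → B z ≤ B 1 + 2*(γ*N 1) - (γ*N 1)*(z^(-γ-1)*E z) := by
    intro z hz1
    have hz0 : (0:ℝ) < z := lt_of_lt_of_le one_pos hz1
    have hq : ∀ x ∈ Set.Icc (1:ℝ) z, HasDerivAt (fun x : ℝ => B x + (γ*N 1)*(x^(-γ-1) * E x))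
        (-(γ/2)*(E x*Φ x) - (γ*N 1*(γ+1))*(x^(-γ-2)*E x) + (γ*N 1/2)*(x^(-γ)*E x)) x := by
      intro x hx
      have hx0 : (0:ℝ) < x := lt_of_lt_of_le one_pos hx.1
      have hid : x^(-γ) = x^(-γ-1)*x := by
        rw [← Real.rpow_add_one hx0.ne' (-γ-1)]; ring_nf
      have h := (hB x hx0.le).add
        (((Real.hasDerivAt_rpow_const (p := -γ-1) (Or.inl hx0.ne')).mul (hE x)).const_mul (γ*N 1))
      convert (config := { preTransparency := .default }) h using 1
      rw [show (-γ-1-1:ℝ) = -γ-2 by ring, hid]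
      ring
    have hsign : ∀ x ∈ Set.Ioo (1:ℝ) z,
        (-(γ/2)*(E x*Φ x) - (γ*N 1*(γ+1))*(x^(-γ-2)*E x) + (γ*N 1/2)*(x^(-γ)*E x)) ≤ 0 := by
      intro x hx
      have hx0 : (0:ℝ) < x := lt_of_lt_of_le one_pos hx.1.le
      have hlb := hΦlb x hx.1.le
      have e1 := mul_le_mul_of_nonneg_left (mul_le_mul_of_nonneg_left hlb (hEpos x).le)
        (show (0:ℝ) ≤ γ/2 by linarith)
      have e2 : 0 ≤ (γ*N 1*(γ+1))*(x^(-γ-2)*E x) := by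
        have := hrpos (-γ-2) x hx0
        have := hEpos x
        positivity
      ring_nf at e1 e2 ⊢
      linarith [e1, e2]
    have hmono : B z + (γ*N 1)*(z^(-γ-1) * E z) ≤ B 1 + (γ*N 1)*((1:ℝ)^(-γ-1) * E 1) :=
      decr hz1 hq hsign
    rw [Real.one_rpow, one_mul] at hmono
    have hE1 : E 1 ≤ 2 := by
      have : E 1 = Real.exp ((1:ℝ)/4) := by rw [hEdef]; norm_num
      rw [this]; exact he14
    have hM : 0 < γ * N 1 := mul_pos hγ0 hN1
    nlinarith [hmono, hE1, hM]
  -- define the constants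
  have hc2pos : 0 < (-B 1) * Real.exp (-(64:ℝ)) :=
    mul_pos (by linarith) (Real.exp_pos _)
  refine ⟨min (γ * N 1/2) ((-B 1) * Real.exp (-(64:ℝ))),
    lt_min (by positivity) hc2pos, 300, by norm_num, ?_⟩
  intro z hz1
  have hz0 : (0:ℝ) < z := lt_of_lt_of_le one_pos hz1
  have hrp1 : 0 < z^(-γ-1) := hrpos _ z hz0
  have hEz := hEpos z
  have hkz := hkey z hz1
  have hBz : B z = E z * deriv Φ z := by rw [hBdef]
  constructor
  · -- lower bound
    have h1 := hBlow z hz1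
    have h2 : -300*z^(-γ-1)*E z ≤ E z * deriv Φ z := by
      rw [← hBz]
      nlinarith [h1, hkz, he3, hrp1, hEz]
    have := (mul_le_mul_iff_of_pos_right hEz).1 (show -300*z^(-γ-1)*E z ≤ deriv Φ z * E z by
      linarith [h2, mul_comm (E z) (deriv Φ z)])
    linarith [this]
  · -- upper bound
    rcases le_total z 16 with hz16 | hz16
    · -- compact part
      have hBle : B z ≤ B 1 := hBanti 1 z (by norm_num) hz1
      have hEle : E z ≤ Real.exp (64:ℝ) := by
        rw [hEdef]; simp only; apply Real.exp_le_exp.2; nlinarith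
      have hrle : z^(-γ-1) ≤ 1 := Real.rpow_le_one_of_one_le_of_nonpos hz1 (by linarith)
      have hee : Real.exp (-(64:ℝ)) * Real.exp (64:ℝ) = 1 := by
        rw [← Real.exp_add]; norm_num
      have hcz : -(min (γ * N 1/2) ((-B 1) * Real.exp (-(64:ℝ)))) * z^(-γ-1) * E z ≥ B 1 := by
        have hmin_le : min (γ * N 1/2) ((-B 1) * Real.exp (-(64:ℝ))) ≤ (-B 1) * Real.exp (-(64:ℝ)) :=
          min_le_right _ _
        have hminpos : 0 < min (γ * N 1/2) ((-B 1) * Real.exp (-(64:ℝ))) :=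
          lt_min (by positivity) hc2pos
        -- min * (r * E) ≤ (-B1) e^{-64} * E ≤ (-B1) e^{-64} e^{64} = -B1
        have s1 : min (γ * N 1/2) ((-B 1) * Real.exp (-(64:ℝ))) * (z^(-γ-1) * E z)
            ≤ ((-B 1) * Real.exp (-(64:ℝ))) * (z^(-γ-1) * E z) :=
          mul_le_mul_of_nonneg_right hmin_le (by positivity)
        have s2 : z^(-γ-1) * E z ≤ E z := by nlinarith [hrle, hEz, hrp1]
        have s3 : ((-B 1) * Real.exp (-(64:ℝ))) * (z^(-γ-1) * E z)
            ≤ ((-B 1) * Real.exp (-(64:ℝ))) * E z :=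
          mul_le_mul_of_nonneg_left s2 hc2pos.le
        have s4 : ((-B 1) * Real.exp (-(64:ℝ))) * E z ≤ (-B 1) := by
          have := mul_le_mul_of_nonneg_left hEle (hc2pos.le)
          nlinarith [hee, hB1]
        nlinarith [s1, s3, s4]
      have hfin : deriv Φ z * E z ≤ (-(min (γ * N 1/2) ((-B 1) * Real.exp (-(64:ℝ)))) * z^(-γ-1)) * E z := by
        have : deriv Φ z * E z = B z := by rw [hBz]; ring
        rw [this]
        calc B z ≤ B 1 := hBle
          _ ≤ -(min (γ * N 1/2) ((-B 1) * Real.exp (-(64:ℝ)))) * z^(-γ-1) * E z := hcz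
          _ = (-(min (γ * N 1/2) ((-B 1) * Real.exp (-(64:ℝ)))) * z^(-γ-1)) * E z := by ring
      have := (mul_le_mul_iff_of_pos_right hEz).1 hfin
      linarith [this]
    · -- tail part z ≥ 16
      have h1 := hBup z hz1
      have hrE4 : 4 ≤ z^(-γ-1) * E z := by
        have hz256 : (256:ℝ) ≤ z^2 := by nlinarith
        have hq1 : 1 ≤ z^(-γ-1) * z^2 := by
          have := hrzid z hz0
          nlinarith [mul_le_mul_of_nonneg_left (hz2 z hz1) hrp1.le]
        have hq2 : z^4/64 ≤ E z := hE4 z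
        have hq3 : z^(-γ-1) * (z^4/64) ≤ z^(-γ-1) * E z :=
          mul_le_mul_of_nonneg_left hq2 hrp1.le
        have c0 : (0:ℝ) ≤ z^2/64 := by positivity
        have c1 := mul_le_mul_of_nonneg_right hq1 c0
        calc (4:ℝ) ≤ z^2/64 := by linarith
          _ = 1*(z^2/64) := by ring
          _ ≤ (z^(-γ-1)*z^2)*(z^2/64) := c1
          _ = z^(-γ-1)*(z^4/64) := by ring
          _ ≤ z^(-γ-1)*E z := hq3
      have hM : 0 < γ * N 1 := mul_pos hγ0 hN1
      have hBz2 : B z ≤ -(γ * N 1/2) * (z^(-γ-1) * E z) := by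
        have t := mul_le_mul_of_nonneg_left hrE4 hM.le
        have hB1' := hB1
        ring_nf at h1 t hB1' ⊢
        linarith [h1, t, hB1']
      have hminle : min (γ * N 1/2) ((-B 1) * Real.exp (-(64:ℝ))) ≤ γ * N 1/2 := min_le_left _ _
      have hfin : deriv Φ z * E z ≤ (-(min (γ * N 1/2) ((-B 1) * Real.exp (-(64:ℝ)))) * z^(-γ-1)) * E z := by
        have hh : deriv Φ z * E z = B z := by rw [hBz]; ring
        rw [hh]
        have : -(γ * N 1/2) * (z^(-γ-1) * E z)
            ≤ (-(min (γ * N 1/2) ((-B 1) * Real.exp (-(64:ℝ)))) * z^(-γ-1)) * E z := by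
          nlinarith [hminle, mul_pos hrp1 hEz]
        linarith [hBz2, this]
      have := (mul_le_mul_iff_of_pos_right hEz).1 hfin
      linarith [this]
end

section
/- Let γ ∈ (0,1) and let Φ solve Φ''(z) + (z/2)Φ'(z) + (γ/2)Φ(z) = 0 with Φ(0)=1, Φ'(0)=0. Then there exists C > 0 such that |Φ''(z)| ≤ C·z^(−γ−2) for all z ≥ 1. -/
/-- Let `γ ∈ (0,1)` and `Φ` solve `Φ'' + (z/2)Φ' + (γ/2)Φ = 0` with
`Φ(0)=1`, `Φ'(0)=0`. Then there is `C > 0` with `|Φ''(z)| ≤ C z^(−γ−2)` for `z ≥ 1`. -/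
theorem stmt9 (γ : ℝ) (hγ : γ ∈ Set.Ioo (0 : ℝ) 1) (Φ : ℝ → ℝ)
    (hsmooth : ContDiff ℝ 2 Φ)
    (hode : ∀ z ≥ (0 : ℝ), deriv (deriv Φ) z + z / 2 * deriv Φ z + γ / 2 * Φ z = 0)
    (h0 : Φ 0 = 1) (h0' : deriv Φ 0 = 0) :
    ∃ C > (0 : ℝ), ∀ z ≥ (1 : ℝ), |deriv (deriv Φ) z| ≤ C * z ^ (-γ - 2) := by
  obtain ⟨hγ0, hγ1⟩ := hγ
  set u1 := deriv Φ with hu1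
  set ψ := deriv u1 with hψd
  set β := γ + 2 with hβ
  have hβ0 : (0:ℝ) < β := by rw [hβ]; linarith
  have hΦd : Differentiable ℝ Φ := hsmooth.differentiable (by norm_num)
  have h2 : ContDiff ℝ ((1:ℕ)+1) Φ := by exact_mod_cast hsmooth
  have hc1 : ContDiff ℝ (1:ℕ) u1 := (contDiff_succ_iff_deriv.mp h2).2.2
  have hu1d : Differentiable ℝ u1 := hc1.differentiable (by norm_num)
  have hψc : Continuous ψ := hc1.continuous_deriv le_rfl
  have hu1' : ∀ z, HasDerivAt u1 (ψ z) z := fun z => (hu1d z).hasDerivAt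
  set u3 : ℝ → ℝ := fun z => -(z/2 * ψ z + (γ+1)/2 * u1 z) with hu3
  set u4 : ℝ → ℝ := fun z => -(z/2 * u3 z + β/2 * ψ z) with hu4
  set P : ℝ → ℝ := fun z => β * ψ z + z * u3 z with hP
  set Q : ℝ → ℝ := fun z => P z^2 + β*(β+1) * ψ z^2 with hQ
  set G : ℝ → ℝ := fun z => (z ^ β)^2 * Q z with hG
  -- ψ' = u3 for z > 0
  have hψ' : ∀ z > (0:ℝ), HasDerivAt ψ (u3 z) z := by
    intro z hz
    have hd1 : HasDerivAt (fun x : ℝ => x/2 * u1 x) (1/2 * u1 z + z/2 * ψ z) z := by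
      exact (((hasDerivAt_id z).div_const 2).mul (hu1' z)).congr_deriv (by simp)
    have hd2 : HasDerivAt (fun x : ℝ => γ/2 * Φ x) (γ/2 * u1 z) z :=
      ((hΦd z).hasDerivAt).const_mul (γ/2)
    have hE : HasDerivAt (fun x : ℝ => -(x/2 * u1 x + γ/2 * Φ x)) (u3 z) z := by
      have := (hd1.add hd2).neg
      refine this.congr_deriv ?_
      rw [hu3]; ring
    apply hE.congr_of_eventuallyEq
    filter_upwards [isOpen_Ioi.mem_nhds hz] with x hx
    have := hode x (le_of_lt hx)
    rw [hψd]; rw [hu1] at this ⊢; linarith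
  -- ψ'' = u4 for z > 0
  have hu3' : ∀ z > (0:ℝ), HasDerivAt u3 (u4 z) z := by
    intro z hz
    have hd1 : HasDerivAt (fun x : ℝ => x/2 * ψ x) (1/2 * ψ z + z/2 * u3 z) z := by
      exact (((hasDerivAt_id z).div_const 2).mul (hψ' z hz)).congr_deriv (by simp)
    have hd2 : HasDerivAt (fun x : ℝ => (γ+1)/2 * u1 x) ((γ+1)/2 * ψ z) z :=
      (hu1' z).const_mul ((γ+1)/2)
    have := (hd1.add hd2).neg
    refine this.congr_deriv ?_
    rw [hu4, hβ]; ring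
  -- derivative of G
  have hG' : ∀ z > (0:ℝ), HasDerivAt G ((z^β)^2 / z * ((2+4*β - z^2) * P z^2)) z := by
    intro z hz
    have hW : HasDerivAt (fun x : ℝ => x ^ β) (β * z ^ (β-1)) z :=
      Real.hasDerivAt_rpow_const (Or.inl hz.ne')
    have hPz : HasDerivAt P ((β+1) * u3 z + z * u4 z) z := by
      have hd1 : HasDerivAt (fun x : ℝ => β * ψ x) (β * u3 z) z := (hψ' z hz).const_mul β
      have hd2 : HasDerivAt (fun x : ℝ => x * u3 x) (1 * u3 z + z * u4 z) z := by
        exact ((hasDerivAt_id z).mul (hu3' z hz)).congr_deriv (by simp)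
      have := hd1.add hd2
      refine this.congr_deriv ?_
      ring
    have hQz : HasDerivAt Q (2 * P z * ((β+1) * u3 z + z * u4 z)
        + β*(β+1) * (2 * ψ z * u3 z)) z := by
      have hd1 := hPz.pow 2
      have hd2 := ((hψ' z hz).pow 2).const_mul (β*(β+1))
      have := hd1.add hd2
      refine this.congr_deriv ?_
      push_cast
      ring
    have := (hW.pow 2).mul hQz
    refine this.congr_deriv ?_
    rw [Real.rpow_sub hz, Real.rpow_one]
    rw [hQ, hP, hu4]
    simp only [Pi.pow_apply]
    field_simp
    ring
  -- G is antitone on [4, ∞)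
  have hanti : AntitoneOn G (Set.Ici (4:ℝ)) := by
    apply antitoneOn_of_deriv_nonpos (convex_Ici 4)
    · intro z hz
      have hz0 : (0:ℝ) < z := lt_of_lt_of_le (by norm_num) hz
      exact (hG' z hz0).continuousAt.continuousWithinAt
    · rw [interior_Ici]
      intro z hz
      have hz0 : (0:ℝ) < z := lt_trans (by norm_num) hz
      exact (hG' z hz0).differentiableAt.differentiableWithinAt
    · rw [interior_Ici]
      intro z hz
      have hz0 : (0:ℝ) < z := lt_trans (by norm_num) hz
      rw [(hG' z hz0).deriv]
      have h1 : (0:ℝ) ≤ (z^β)^2 / z := by positivity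
      have h2 : (2+4*β - z^2) * P z^2 ≤ 0 := by
        apply mul_nonpos_of_nonpos_of_nonneg
        · have : (4:ℝ) < z := hz
          nlinarith [hγ1]
        · positivity
      exact mul_nonpos_of_nonneg_of_nonpos h1 h2
  -- the decay bound for z ≥ 4
  set D := β * (β+1) with hD
  have hD0 : (0:ℝ) < D := by rw [hD]; nlinarith
  set C1 := Real.sqrt (G 4 / D) with hC1
  have hC1nn : 0 ≤ C1 := Real.sqrt_nonneg _
  have hfar : ∀ z ≥ (4:ℝ), |ψ z| ≤ C1 * z ^ (-β) := by
    intro z hz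
    have hz0 : (0:ℝ) < z := lt_of_lt_of_le (by norm_num) hz
    have hGle : G z ≤ G 4 := hanti (Set.self_mem_Ici) hz hz
    have hlow : D * (z ^ β * ψ z)^2 ≤ G z := by
      simp only [hG, hQ]
      nlinarith [mul_nonneg (sq_nonneg (z^β)) (sq_nonneg (P z))]
    have hsq : (z ^ β * ψ z)^2 ≤ G 4 / D := by
      rw [le_div_iff₀ hD0]
      nlinarith
    have habs : |z ^ β * ψ z| ≤ C1 := by
      rw [← Real.sqrt_sq_eq_abs, hC1]
      exact Real.sqrt_le_sqrt hsq
    have hzb : (0:ℝ) < z ^ β := Real.rpow_pos_of_pos hz0 β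
    rw [abs_mul, abs_of_pos hzb] at habs
    rw [Real.rpow_neg hz0.le, ← div_eq_mul_inv, le_div_iff₀ hzb]
    linarith [habs]
  -- the compact part [1,4]
  obtain ⟨M, hM⟩ := (isCompact_Icc (a := (1:ℝ)) (b := 4)).exists_bound_of_continuousOn
    hψc.continuousOn
  set M' := max M 0 with hM'
  set C2 := M' * (4:ℝ) ^ β with hC2
  have hC2nn : 0 ≤ C2 := by
    rw [hC2]
    exact mul_nonneg (le_max_right M 0) (Real.rpow_pos_of_pos (by norm_num) β).le
  have hnear : ∀ z ∈ Set.Icc (1:ℝ) 4, |ψ z| ≤ C2 * z ^ (-β) := by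
    intro z hz
    obtain ⟨hz1, hz4⟩ := hz
    have hz0 : (0:ℝ) < z := lt_of_lt_of_le (by norm_num) hz1
    have h1 : |ψ z| ≤ M' := le_trans (by simpa using hM z ⟨hz1, hz4⟩) (le_max_left M 0)
    have hzb : (0:ℝ) < z ^ β := Real.rpow_pos_of_pos hz0 β
    have h4b : (0:ℝ) < (4:ℝ) ^ β := Real.rpow_pos_of_pos (by norm_num) β
    have hle : z ^ β ≤ (4:ℝ) ^ β := Real.rpow_le_rpow hz0.le hz4 hβ0.le
    have hinv : ((4:ℝ) ^ β)⁻¹ ≤ (z ^ β)⁻¹ := by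
      apply inv_anti₀ hzb hle
    have : (1:ℝ) ≤ (4:ℝ)^β * (z ^ β)⁻¹ := by
      rw [← mul_inv_cancel₀ h4b.ne']
      exact mul_le_mul_of_nonneg_left hinv h4b.le
    calc |ψ z| ≤ M' := h1
      _ = M' * 1 := by ring
      _ ≤ M' * ((4:ℝ)^β * (z ^ β)⁻¹) :=
          mul_le_mul_of_nonneg_left this (le_max_right M 0)
      _ = C2 * z ^ (-β) := by rw [hC2, Real.rpow_neg hz0.le]; ring
  -- combine
  refine ⟨C1 + C2 + 1, by positivity, ?_⟩
  intro z hz1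
  have hz0 : (0:ℝ) < z := lt_of_lt_of_le (by norm_num) hz1
  have hexp : -γ - 2 = -β := by rw [hβ]; ring
  rw [hexp]
  have hzb : (0:ℝ) < z ^ (-β) := Real.rpow_pos_of_pos hz0 _
  rcases le_or_gt 4 z with h4 | h4
  · calc |ψ z| ≤ C1 * z ^ (-β) := hfar z h4
      _ ≤ (C1 + C2 + 1) * z ^ (-β) := by nlinarith
  · calc |ψ z| ≤ C2 * z ^ (-β) := hnear z ⟨hz1, h4.le⟩
      _ ≤ (C1 + C2 + 1) * z ^ (-β) := by nlinarith
end

section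
/- Let γ ∈ (0,1), n ≥ 3, and let Φ solve Φ'' + (z/2)Φ' + (γ/2)Φ = 0 with Φ(0)=1, Φ'(0)=0. Suppose there exist z₀ > 0, c₁ > 0, c₂ > 0 with Φ''(z) ≤ 0 for z ∈ [0,z₀], Φ'(z) ≤ −c₁ z^(−γ−1) for z > z₀, and Φ''(z) ≤ c₂ z^(−γ−2) for z > z₀. Then for every t₀ ≥ (c₂/((n−2)c₁ z₀))², every ξ₀ > 0 and A > 0, the function χ(ξ,t) := A(t+t₀)^(−γ/2) Φ((ξ+ξ₀)(t+t₀)^(−1/2)) satisfies χ_{ξξ}(ξ,t) + (n−2)·χ_ξ(ξ,t) ≤ 0 for all ξ > 0 and t > 0. -/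
/-- Under the stated sign and decay hypotheses on `Φ`, for every
`t₀ ≥ (c₂/((n−2)c₁z₀))²` with `t₀ ≥ 1`, every `ξ₀ > 0` and `A > 0`, the function
`χ(ξ,t) = A(t+t₀)^(−γ/2) Φ((ξ+ξ₀)(t+t₀)^(−1/2))` satisfies
`χ_{ξξ} + (n−2)χ_ξ ≤ 0` for all `ξ > 0`, `t > 0`. -/
theorem stmt13 (γ : ℝ) (hγ : γ ∈ Set.Ioo (0 : ℝ) 1) (n : ℕ) (hn : 3 ≤ n)
    (Φ : ℝ → ℝ) (hsmooth : ContDiff ℝ 2 Φ)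
    (hode : ∀ z ≥ (0 : ℝ), deriv (deriv Φ) z + z / 2 * deriv Φ z + γ / 2 * Φ z = 0)
    (h0 : Φ 0 = 1) (h0' : deriv Φ 0 = 0)
    (hmono : AntitoneOn Φ (Set.Ici (0 : ℝ)))
    (z₀ c₁ c₂ : ℝ) (hz₀ : 0 < z₀) (hc₁ : 0 < c₁) (hc₂ : 0 < c₂)
    (hPhi'' : ∀ z ∈ Set.Icc (0 : ℝ) z₀, deriv (deriv Φ) z ≤ 0)
    (hPhi' : ∀ z > z₀, deriv Φ z ≤ -c₁ * z ^ (-γ - 1))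
    (hPhi''2 : ∀ z > z₀, deriv (deriv Φ) z ≤ c₂ * z ^ (-γ - 2))
    (t₀ : ℝ) (ht₀ : (c₂ / (((n : ℝ) - 2) * c₁ * z₀)) ^ 2 ≤ t₀) (ht₀1 : 1 ≤ t₀)
    (ξ₀ A : ℝ) (hξ₀ : 0 < ξ₀) (hA : 0 < A)
    (χ : ℝ → ℝ → ℝ)
    (hχ : ∀ ξ t : ℝ, χ ξ t =
      A * (t + t₀) ^ (-(γ / 2)) * Φ ((ξ + ξ₀) * (t + t₀) ^ (-(1 : ℝ) / 2))) :
    ∀ ξ > (0 : ℝ), ∀ t > (0 : ℝ),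
      deriv (deriv (fun x => χ x t)) ξ + ((n : ℝ) - 2) * deriv (fun x => χ x t) ξ ≤ 0 := by
  intro ξ hξ t ht
  have hn2 : (1 : ℝ) ≤ (n : ℝ) - 2 := by
    have : (3 : ℝ) ≤ (n : ℝ) := by exact_mod_cast hn
    linarith
  have htt : (0 : ℝ) < t + t₀ := by linarith
  set s : ℝ := (t + t₀) ^ (-(1 : ℝ) / 2) with hs
  set C : ℝ := A * (t + t₀) ^ (-(γ / 2)) with hC
  have hs0 : 0 < s := Real.rpow_pos_of_pos htt _
  have hC0 : 0 < C := mul_pos hA (Real.rpow_pos_of_pos htt _)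
  -- differentiability
  have hΦd : Differentiable ℝ Φ := hsmooth.differentiable (by norm_num)
  have h2 : ContDiff ℝ ((1 : WithTop ℕ∞) + 1) Φ := by
    rw [one_add_one_eq_two]; exact_mod_cast hsmooth
  have hΦ'd : Differentiable ℝ (deriv Φ) :=
    ((contDiff_succ_iff_deriv.mp h2).2.2).differentiable one_ne_zero
  have hzder : ∀ x : ℝ, HasDerivAt (fun x : ℝ => (x + ξ₀) * s) s x := by
    intro x
    simpa using (((hasDerivAt_id x).add_const ξ₀).mul_const s)
  have hfun : (fun x => χ x t) = fun x => C * Φ ((x + ξ₀) * s) := by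
    funext x; rw [hχ x t]
  have hd1 : ∀ x : ℝ, HasDerivAt (fun x => C * Φ ((x + ξ₀) * s))
      (C * (deriv Φ ((x + ξ₀) * s) * s)) x := by
    intro x
    exact (((hΦd ((x + ξ₀) * s)).hasDerivAt.comp x (hzder x)).const_mul C)
  have hder1 : deriv (fun x => χ x t) = fun x => C * (deriv Φ ((x + ξ₀) * s) * s) := by
    rw [hfun]; funext x; exact (hd1 x).deriv
  have hd2 : HasDerivAt (fun x => C * (deriv Φ ((x + ξ₀) * s) * s))
      (C * (deriv (deriv Φ) ((ξ + ξ₀) * s) * s * s)) ξ :=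
    by exact ((((hΦ'd ((ξ + ξ₀) * s)).hasDerivAt.comp ξ (hzder ξ)).mul_const s).const_mul C)
  rw [hder1]
  rw [hd2.deriv]
  show C * (deriv (deriv Φ) ((ξ + ξ₀) * s) * s * s) +
      ((n : ℝ) - 2) * (C * (deriv Φ ((ξ + ξ₀) * s) * s)) ≤ 0
  set z : ℝ := (ξ + ξ₀) * s with hzdef
  have hzpos : 0 < z := mul_pos (by linarith) hs0
  -- key scalar inequality
  have key : s * deriv (deriv Φ) z + ((n : ℝ) - 2) * deriv Φ z ≤ 0 := by
    rcases le_or_gt z z₀ with hle | hgt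
    · have h1 : deriv (deriv Φ) z ≤ 0 := hPhi'' z ⟨hzpos.le, hle⟩
      have h2' : deriv Φ z ≤ 0 := by
        have hslope : Filter.Tendsto (slope Φ z) (nhdsWithin z (Set.Ioi z))
            (nhds (deriv Φ z)) :=
          (hasDerivAt_iff_tendsto_slope.mp (hΦd z).hasDerivAt).mono_left
            (nhdsWithin_mono z fun y hy => ne_of_gt hy)
        have hev : ∀ᶠ y in nhdsWithin z (Set.Ioi z), slope Φ z y ≤ 0 := by
          filter_upwards [self_mem_nhdsWithin] with y hy
          have hy' : z < y := hy
          have hΦle : Φ y ≤ Φ z := hmono hzpos.le (le_of_lt (lt_trans hzpos hy')) hy'.le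
          rw [slope_def_field]
          have : y - z > 0 := by linarith
          exact div_nonpos_of_nonpos_of_nonneg (by linarith) this.le
        exact le_of_tendsto hslope hev
      nlinarith
    · -- z > z₀
      have hw : (0 : ℝ) < z ^ (-γ - 1) := Real.rpow_pos_of_pos hzpos _
      have hsplit : z ^ (-γ - 2) = z ^ (-γ - 1) / z := by
        rw [show (-γ - 2 : ℝ) = (-γ - 1) + (-1) by ring, Real.rpow_add hzpos,
          Real.rpow_neg_one]
        ring
      have hP1 := hPhi' z hgt
      have hP2 := hPhi''2 z hgt
      -- bound on s
      set a : ℝ := c₂ / (((n : ℝ) - 2) * c₁ * z₀) with ha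
      have hden : (0 : ℝ) < ((n : ℝ) - 2) * c₁ * z₀ := by positivity
      have ha0 : (0 : ℝ) < a := by positivity
      have hasqrt : a ≤ Real.sqrt (t + t₀) := by
        calc a = Real.sqrt (a ^ 2) := (Real.sqrt_sq ha0.le).symm
        _ ≤ Real.sqrt t₀ := Real.sqrt_le_sqrt ht₀
        _ ≤ Real.sqrt (t + t₀) := Real.sqrt_le_sqrt (by linarith)
      have hseq : s = (Real.sqrt (t + t₀))⁻¹ := by
        rw [hs, Real.sqrt_eq_rpow, ← Real.rpow_neg htt.le]
        norm_num
      have hsle : s ≤ a⁻¹ := by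
        rw [hseq]
        exact inv_anti₀ ha0 hasqrt
      have hainv : a⁻¹ * c₂ = ((n : ℝ) - 2) * c₁ * z₀ := by
        rw [ha, inv_div, div_mul_cancel₀ _ hc₂.ne']
      have hsbound : s * c₂ ≤ ((n : ℝ) - 2) * c₁ * z₀ := by
        rw [← hainv]
        exact mul_le_mul_of_nonneg_right hsle hc₂.le
      have hzz : s * c₂ ≤ ((n : ℝ) - 2) * c₁ * z := by
        have : ((n : ℝ) - 2) * c₁ * z₀ ≤ ((n : ℝ) - 2) * c₁ * z :=
          mul_le_mul_of_nonneg_left hgt.le (by positivity)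
        linarith
      have h1 : s * deriv (deriv Φ) z ≤ s * (c₂ * (z ^ (-γ - 1) / z)) := by
        rw [← hsplit]; exact mul_le_mul_of_nonneg_left hP2 hs0.le
      have h2' : ((n : ℝ) - 2) * deriv Φ z ≤ ((n : ℝ) - 2) * (-c₁ * z ^ (-γ - 1)) :=
        mul_le_mul_of_nonneg_left hP1 (by linarith)
      have hq : (0 : ℝ) < z ^ (-γ - 1) / z := div_pos hw hzpos
      have hfin : s * (c₂ * (z ^ (-γ - 1) / z)) + ((n : ℝ) - 2) * (-c₁ * z ^ (-γ - 1)) ≤ 0 := by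
        have heq : s * (c₂ * (z ^ (-γ - 1) / z)) + ((n : ℝ) - 2) * (-c₁ * z ^ (-γ - 1))
            = (z ^ (-γ - 1) / z) * (s * c₂ - ((n : ℝ) - 2) * c₁ * z) := by
          field_simp
          ring
        rw [heq]
        exact mul_nonpos_of_nonneg_of_nonpos hq.le (by linarith)
      linarith
  have hfactor : C * (deriv (deriv Φ) z * s * s) + ((n : ℝ) - 2) * (C * (deriv Φ z * s))
      = (C * s) * (s * deriv (deriv Φ) z + ((n : ℝ) - 2) * deriv Φ z) := by ring
  rw [hfactor]
  exact mul_nonpos_of_nonneg_of_nonpos (mul_pos hC0 hs0).le key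
end

section
/- Let n ≥ 3, D > 0, γ > 0 and a ∈ (0,1). Then there exists ξ₀ > 1 such that the function χ̂(ξ,t) := a(t+1)^(−γ/2)·(1 + (ξ−ξ₀)²/(4(t+1)))^(−γ/2) satisfies, for all ξ > ξ₀ and t > 0, the differential inequality χ̂_t − χ̂_{ξξ} − e^(−2ξ)·{ (D+χ̂)(χ̂_{ξξ} + (n−2)χ̂_ξ) − ((n−2)/2)·χ̂_ξ² } ≤ 0. -/
set_option maxHeartbeats 1000000

lemma aux_exp (y : ℝ) (hy : 0 ≤ y) : Real.exp (-y) * y ≤ 1 := by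
  have h1 : y + 1 ≤ Real.exp y := Real.add_one_le_exp y
  have h2 : Real.exp (-y) * Real.exp y = 1 := by rw [← Real.exp_add]; simp
  have h3 : 0 < Real.exp (-y) := Real.exp_pos _
  nlinarith [mul_le_mul_of_nonneg_left h1 h3.le]

lemma aux_key (N D γ a s c U V W u E0 K p : ℝ)
    (hN : 3 ≤ N) (hD : 0 < D) (hγ : 0 < γ) (ha0 : 0 < a) (ha1 : a < 1)
    (hs : 0 < s) (hu : 1 < u)
    (hU0 : 0 < U) (hV0 : 0 < V) (hW0 : 0 < W) (hU1 : U ≤ 1) (hW1 : W ≤ 1)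
    (hVu : V * u = U) (hUu : U * u = W) (hsu : s^2 ≤ 4*u)
    (hc0 : 0 < c) (hcU : c ≤ E0) (hcs : c * s ≤ E0) (hE00 : 0 < E0)
    (hK : K = (D+1)*(γ/2)*((N-1)/2) + (N-2)*γ^2/8)
    (hEK : E0 * (8*(K+1)) ≤ γ)
    (hp : p = -(γ/2)) :
    a * (p * U) - a * p * ((p-1) * V * (s/2) * (s/2) + U * (1/2))
      - c * ((D + a * W) * (a * p * ((p-1) * V * (s/2) * (s/2) + U * (1/2))
            + (N-2) * (a * (p * U * (s/2))))
          - (N-2)/2 * (a * (p * U * (s/2)))^2) ≤ 0 := by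
  subst hp
  have hhint : 0 ≤ a * γ * (γ + 2) * (V * s^2) :=
    mul_nonneg (mul_nonneg (mul_nonneg ha0.le hγ.le) (by linarith)) (mul_nonneg hV0.le (sq_nonneg s))
  have hUu1 : U * u ≤ 1 := by rw [hUu]; exact hW1
  have hUs2 : U * s^2 ≤ 4 := by nlinarith [mul_le_mul_of_nonneg_left hsu hU0.le]
  have hN2 : (1:ℝ) ≤ N - 2 := by linarith
  have haW : a * W ≤ 1 := by nlinarith
  have hK0 : 0 ≤ K := by
    have h1 : 0 ≤ (D+1)*(γ/2)*((N-1)/2) :=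
      mul_nonneg (mul_nonneg (by linarith) (by linarith)) (by linarith)
    have h2 : 0 ≤ (N-2)*γ^2/8 := by
      apply div_nonneg _ (by norm_num)
      exact mul_nonneg (by linarith) (sq_nonneg γ)
    linarith
  -- Step A : heat part
  have hA : a * (-(γ/2) * U) - a * -(γ/2) * ((-(γ/2)-1) * V * (s/2) * (s/2) + U * (1/2))
      ≤ -(a*γ/4) * U := by linarith [hhint]
  -- Step B pieces
  have hY0 : 0 ≤ a * (γ/2) * (U/2 + (N-2) * U * (s/2)) := by
    have h' : 0 ≤ (N-2) * U * (s/2) := mul_nonneg (mul_nonneg (by linarith) hU0.le) (by linarith)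
    have h'' : 0 ≤ U/2 + (N-2) * U * (s/2) := by linarith
    exact mul_nonneg (by positivity) h''
  have h1 : -(a * -(γ/2) * ((-(γ/2)-1) * V * (s/2) * (s/2) + U * (1/2))
        + (N-2) * (a * (-(γ/2) * U * (s/2))))
      ≤ a * (γ/2) * (U/2 + (N-2) * U * (s/2)) := by linarith [hhint]
  have hDW1 : D + a * W ≤ D + 1 := by linarith
  have hDW0 : 0 < D + a * W := by positivity
  have e6 : c * U ≤ E0 * U := mul_le_mul_of_nonneg_right hcU hU0.le
  have e7 : (c * s) * U ≤ E0 * U := mul_le_mul_of_nonneg_right hcs hU0.le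
  have e8 : c * (a * (γ/2) * (U/2 + (N-2) * U * (s/2)))
      ≤ a * (γ/2) * ((N-1)/2) * (E0 * U) := by
    have c1 : (0:ℝ) ≤ a*(γ/2)/2 := by positivity
    have c2 : (0:ℝ) ≤ a*(γ/2)*(N-2)/2 := by
      have h' : (0:ℝ) ≤ a*(γ/2) := by positivity
      nlinarith
    have e8a := mul_le_mul_of_nonneg_left e6 c1
    have e8b := mul_le_mul_of_nonneg_left e7 c2
    nlinarith [e8a, e8b]
  have e9 : c * ((D + a * W) * (-(a * -(γ/2) * ((-(γ/2)-1) * V * (s/2) * (s/2) + U * (1/2))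
        + (N-2) * (a * (-(γ/2) * U * (s/2))))))
      ≤ (D+1) * (a * (γ/2) * ((N-1)/2) * (E0 * U)) := by
    have s1 := mul_le_mul_of_nonneg_left h1 (mul_pos hc0 hDW0).le
    have s3 := mul_le_mul_of_nonneg_right (mul_le_mul_of_nonneg_left hDW1 hc0.le) hY0
    have s4 := mul_le_mul_of_nonneg_left e8 (by linarith : (0:ℝ) ≤ D + 1)
    nlinarith [s1, s3, s4]
  have e2 : U * (U * s^2) ≤ U * 4 := mul_le_mul_of_nonneg_left hUs2 hU0.le
  have e3 : c * (U * (U * s^2)) ≤ E0 * (U * 4) :=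
    mul_le_mul hcU e2 (by positivity) hE00.le
  have e4 : a^2 ≤ a := by nlinarith
  have e5 : a^2 * (c * (U * (U * s^2))) ≤ a * (E0 * (U * 4)) :=
    mul_le_mul e4 e3 (by positivity) ha0.le
  have hT3 : c * ((N-2)/2 * (a * (-(γ/2) * U * (s/2)))^2)
      ≤ (N-2)*γ^2/8 * (E0 * (a * U)) := by
    have c3 : (0:ℝ) ≤ (N-2)*γ^2/32 := by
      apply div_nonneg _ (by norm_num); exact mul_nonneg (by linarith) (sq_nonneg γ)
    have h' := mul_le_mul_of_nonneg_left e5 c3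
    nlinarith [h']
  have hEKsmall : E0 * K ≤ γ/8 := by nlinarith
  have hfin := mul_le_mul_of_nonneg_left hEKsmall (mul_nonneg ha0.le hU0.le)
  have haγU : 0 ≤ a * γ * U := mul_nonneg (mul_nonneg ha0.le hγ.le) hU0.le
  subst hK
  linarith [hA, e9, hT3, hfin, haγU]

lemma aux_base (c x0 x : ℝ) : HasDerivAt (fun y => c + (y - x0)^2/4) ((x - x0)/2) x := by
  have h : HasDerivAt (fun y : ℝ => y - x0) 1 x := (hasDerivAt_id x).sub_const x0
  have h2 := ((h.pow 2).div_const 4).const_add c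
  convert h2 using 1
  · rfl
  · rfl
  simp; ring

lemma aux_F (a p c x0 x : ℝ) (hc : 0 < c + (x - x0)^2/4) :
    HasDerivAt (fun y => a * (c + (y - x0)^2/4) ^ p)
      (a * (p * (c + (x-x0)^2/4) ^ (p-1) * ((x-x0)/2))) x := by
  have hb := aux_base c x0 x
  have hr := (Real.hasDerivAt_rpow_const (x := c + (x-x0)^2/4) (p := p) (Or.inl (ne_of_gt hc)))
  have := (hr.comp x hb).const_mul a
  convert this using 1
  · rfl
  · rfl
  · rfl

lemma aux_F2 (a p c x0 x : ℝ) (hc : 0 < c + (x-x0)^2/4) :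
    HasDerivAt (fun y => a * (p * (c+(y-x0)^2/4)^(p-1) * ((y-x0)/2)))
      (a * p * ((p-1) * (c+(x-x0)^2/4)^(p-2) * ((x-x0)/2) * ((x-x0)/2)
        + (c+(x-x0)^2/4)^(p-1) * (1/2))) x := by
  have hb := aux_base c x0 x
  have hr := (Real.hasDerivAt_rpow_const (x := c + (x-x0)^2/4) (p := p-1)
    (Or.inl (ne_of_gt hc))).comp x hb
  have hl : HasDerivAt (fun y : ℝ => (y - x0)/2) (1/2) x :=
    ((hasDerivAt_id x).sub_const x0).div_const 2
  have h := (hr.mul hl).const_mul (a*p)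
  have he : p - 1 - 1 = p - 2 := by ring
  rw [he] at h
  convert h using 1
  · rfl
  · rfl
  funext y
  simp only [Function.comp, Pi.mul_apply]
  ring
  rfl

lemma aux_Ft (a p q t : ℝ) (h : 0 < t + 1 + q) :
    HasDerivAt (fun s => a * (s + 1 + q) ^ p) (a * (p * (t+1+q)^(p-1))) t := by
  have hb : HasDerivAt (fun s : ℝ => s + 1 + q) 1 t :=
    ((hasDerivAt_id t).add_const 1).add_const q
  have hr := (Real.hasDerivAt_rpow_const (x := t+1+q) (p := p) (Or.inl h.ne')).comp t hb
  have h2 := hr.const_mul a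
  convert h2 using 1
  · rfl
  · rfl
  · rfl
  simp [Function.comp]

/-- Let `n ≥ 3`, `D > 0`, `γ > 0`, `a ∈ (0,1)`. Then there exists
`ξ₀ > 1` such that `χ̂(ξ,t) = a(t+1)^(−γ/2)(1 + (ξ−ξ₀)²/(4(t+1)))^(−γ/2)` satisfies
`χ̂_t − χ̂_{ξξ} − e^(−2ξ){(D+χ̂)(χ̂_{ξξ} + (n−2)χ̂_ξ) − ((n−2)/2)χ̂_ξ²} ≤ 0`
for all `ξ > ξ₀`, `t > 0`. -/
theorem stmt15 (n : ℕ) (hn : 3 ≤ n) (D γ a : ℝ) (hD : 0 < D) (hγ : 0 < γ)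
    (ha : a ∈ Set.Ioo (0 : ℝ) 1) :
    ∃ ξ₀ > (1 : ℝ), ∀ χ : ℝ → ℝ → ℝ,
      (∀ ξ t : ℝ, χ ξ t =
        a * (t + 1) ^ (-(γ / 2)) * (1 + (ξ - ξ₀) ^ 2 / (4 * (t + 1))) ^ (-(γ / 2))) →
      ∀ ξ > ξ₀, ∀ t > (0 : ℝ),
        deriv (fun s => χ ξ s) t - deriv (deriv (fun x => χ x t)) ξ
          - Real.exp (-2 * ξ) *
            ((D + χ ξ t) *
                (deriv (deriv (fun x => χ x t)) ξ + ((n : ℝ) - 2) * deriv (fun x => χ x t) ξ)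
              - ((n : ℝ) - 2) / 2 * (deriv (fun x => χ x t) ξ) ^ 2) ≤ 0 := by
  obtain ⟨ha0, ha1⟩ := ha
  have hn3 : (3:ℝ) ≤ (n:ℝ) := by exact_mod_cast hn
  obtain ⟨K, hKdef⟩ : ∃ K : ℝ, K = (D+1)*(γ/2)*(((n:ℝ)-1)/2) + ((n:ℝ)-2)*γ^2/8 := ⟨_, rfl⟩
  have hK0 : 0 ≤ K := by
    have h1 : 0 ≤ (D+1)*(γ/2)*(((n:ℝ)-1)/2) :=
      mul_nonneg (mul_nonneg (by linarith) (by linarith)) (by linarith)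
    have h2 : 0 ≤ ((n:ℝ)-2)*γ^2/8 := by
      apply div_nonneg _ (by norm_num)
      exact mul_nonneg (by linarith) (sq_nonneg γ)
    rw [hKdef]; linarith
  obtain ⟨x0, hx0def⟩ : ∃ x0 : ℝ, x0 = 1 + 8*(K+1)/γ := ⟨_, rfl⟩
  have hK1 : 0 < K + 1 := by linarith
  have hx01 : 1 < x0 := by
    rw [hx0def]
    have : 0 < 8*(K+1)/γ := by positivity
    linarith
  refine ⟨x0, hx01, ?_⟩
  intro χ hχ ξ hξ t ht
  have ht1 : (0:ℝ) < t + 1 := by linarith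
  -- value identity
  have hval : ∀ x s : ℝ, 0 < s + 1 →
      χ x s = a * (s + 1 + (x - x0)^2/4) ^ (-(γ/2)) := by
    intro x s hs
    rw [hχ]
    have hb : (0:ℝ) ≤ 1 + (x-x0)^2/(4*(s+1)) := by positivity
    rw [mul_assoc, ← Real.mul_rpow hs.le hb]
    congr 2
    field_simp
  -- t-derivative
  have htEq : (fun s => χ ξ s) =ᶠ[nhds t]
      (fun s => a * (s + 1 + (ξ - x0)^2/4) ^ (-(γ/2))) := by
    filter_upwards [eventually_gt_nhds (show (-1:ℝ) < t by linarith)] with s hs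
    exact hval ξ s (by linarith)
  have hdt : deriv (fun s => χ ξ s) t
      = a * (-(γ/2) * (t + 1 + (ξ-x0)^2/4) ^ (-(γ/2)-1)) := by
    rw [htEq.deriv_eq]
    exact (aux_Ft a (-(γ/2)) ((ξ-x0)^2/4) t
      (by have := sq_nonneg (ξ - x0); linarith [sq_nonneg (ξ - x0)])).deriv
  -- x-derivatives
  have hfx : (fun x => χ x t) = fun x => a * (t + 1 + (x - x0)^2/4) ^ (-(γ/2)) :=
    funext fun x => hval x t ht1
  have hd1 : deriv (fun x => χ x t)
      = fun x => a * (-(γ/2) * (t + 1 + (x-x0)^2/4) ^ (-(γ/2)-1) * ((x-x0)/2)) := by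
    rw [hfx]
    funext x
    exact (aux_F a (-(γ/2)) (t+1) x0 x (by have := sq_nonneg (x - x0); linarith)).deriv
  have hd2 : deriv (deriv (fun x => χ x t)) ξ
      = a * -(γ/2) * ((-(γ/2)-1) * (t+1+(ξ-x0)^2/4)^(-(γ/2)-2) * ((ξ-x0)/2) * ((ξ-x0)/2)
          + (t+1+(ξ-x0)^2/4)^(-(γ/2)-1) * (1/2)) := by
    rw [hd1]
    exact (aux_F2 a (-(γ/2)) (t+1) x0 ξ (by have := sq_nonneg (ξ - x0); linarith)).deriv
  have hdx : deriv (fun x => χ x t) ξ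
      = a * (-(γ/2) * (t+1+(ξ-x0)^2/4)^(-(γ/2)-1) * ((ξ-x0)/2)) := by rw [hd1]
  have hχv : χ ξ t = a * (t+1+(ξ-x0)^2/4) ^ (-(γ/2)) := hval ξ t ht1
  rw [hdt, hd2, hdx, hχv]
  -- set up atoms
  have hs0 : 0 < ξ - x0 := by linarith
  have hupos : 0 < t+1+(ξ-x0)^2/4 := by have := sq_nonneg (ξ - x0); linarith
  have hu1 : 1 < t+1+(ξ-x0)^2/4 := by have := sq_nonneg (ξ - x0); nlinarith [sq_nonneg (ξ-x0), hs0]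
  have hU0 : 0 < (t+1+(ξ-x0)^2/4)^(-(γ/2)-1) := Real.rpow_pos_of_pos hupos _
  have hV0 : 0 < (t+1+(ξ-x0)^2/4)^(-(γ/2)-2) := Real.rpow_pos_of_pos hupos _
  have hW0 : 0 < (t+1+(ξ-x0)^2/4)^(-(γ/2)) := Real.rpow_pos_of_pos hupos _
  have hU1 : (t+1+(ξ-x0)^2/4)^(-(γ/2)-1) ≤ 1 :=
    Real.rpow_le_one_of_one_le_of_nonpos hu1.le (by linarith)
  have hW1 : (t+1+(ξ-x0)^2/4)^(-(γ/2)) ≤ 1 :=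
    Real.rpow_le_one_of_one_le_of_nonpos hu1.le (by linarith)
  have hVu : (t+1+(ξ-x0)^2/4)^(-(γ/2)-2) * (t+1+(ξ-x0)^2/4)
      = (t+1+(ξ-x0)^2/4)^(-(γ/2)-1) := by
    have h := Real.rpow_add_one hupos.ne' (-(γ/2)-2)
    rw [show -(γ/2)-2+1 = -(γ/2)-1 by ring] at h
    exact h.symm
  have hUu : (t+1+(ξ-x0)^2/4)^(-(γ/2)-1) * (t+1+(ξ-x0)^2/4)
      = (t+1+(ξ-x0)^2/4)^(-(γ/2)) := by
    have h := Real.rpow_add_one hupos.ne' (-(γ/2)-1)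
    rw [show -(γ/2)-1+1 = -(γ/2) by ring] at h
    exact h.symm
  have hsu : (ξ-x0)^2 ≤ 4*(t+1+(ξ-x0)^2/4) := by nlinarith
  have hc0 : 0 < Real.exp (-2*ξ) := Real.exp_pos _
  have hE00 : 0 < Real.exp (-2*x0) := Real.exp_pos _
  have hcU : Real.exp (-2*ξ) ≤ Real.exp (-2*x0) := Real.exp_le_exp.mpr (by linarith)
  have hcs : Real.exp (-2*ξ) * (ξ - x0) ≤ Real.exp (-2*x0) := by
    have hsplit : Real.exp (-2*ξ) = Real.exp (-2*x0) * Real.exp (-(2*(ξ-x0))) := by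
      rw [← Real.exp_add]; congr 1; ring
    have he1 : Real.exp (-(2*(ξ-x0))) * (2*(ξ-x0)) ≤ 1 := aux_exp _ (by linarith)
    have he0 : 0 < Real.exp (-(2*(ξ-x0))) := Real.exp_pos _
    rw [hsplit]
    nlinarith [he1, he0, hE00]
  have hEK : Real.exp (-2*x0) * (8*(K+1)) ≤ γ := by
    have h1 : Real.exp (-(2*x0)) * (2*x0) ≤ 1 := aux_exp (2*x0) (by linarith)
    rw [show -(2*x0) = -2*x0 by ring] at h1
    have h2 : 8*(K+1) = γ*(x0 - 1) := by rw [hx0def]; field_simp; ring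
    have h3 : x0 - 1 ≤ 2*x0 := by linarith
    have h4 : Real.exp (-2*x0) * (x0-1) ≤ Real.exp (-2*x0) * (2*x0) :=
      mul_le_mul_of_nonneg_left h3 hE00.le
    calc Real.exp (-2*x0) * (8*(K+1)) = γ * (Real.exp (-2*x0) * (x0-1)) := by rw [h2]; ring
      _ ≤ γ * 1 := by
          apply mul_le_mul_of_nonneg_left _ hγ.le
          linarith
      _ = γ := mul_one γ
  exact aux_key (n:ℝ) D γ a (ξ - x0) (Real.exp (-2*ξ))
    ((t+1+(ξ-x0)^2/4)^(-(γ/2)-1)) ((t+1+(ξ-x0)^2/4)^(-(γ/2)-2))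
    ((t+1+(ξ-x0)^2/4)^(-(γ/2))) (t+1+(ξ-x0)^2/4) (Real.exp (-2*x0)) K (-(γ/2))
    hn3 hD hγ ha0 ha1 hs0 hu1 hU0 hV0 hW0 hU1 hW1 hVu hUu hsu hc0 hcU hcs hE00
    hKdef hEK rfl
end
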